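/- Let $K$ be an algebraically closed field of characteristic $0$ and $(M, Q')$ a nondegenerate quadratic space with orthogonal decomposition $M = M_{a,0} \oplus M_{b,0} \oplus B$, where $B$ is a hyperbolic plane with isotropic basis $w, w'$, and let $\nu(t)$ act by $t^{-1}$ on $w$, by $t$ on $w'$, and trivially on $M_0 = M_{a,0} \oplus M_{b,0}$. Suppose $(M_b, \varphi_b) = (M_{b,0} \oplus B, \varphi_{b,0} \oplus \varphi_B)$ is an Hermitian space over $K \times K$ respecting $Q'|_{M_b}$. If $G \subseteq \mathrm{SO}(M)$ is a connected reductive subgroup containing $\mathrm{im}\,\nu$ such that (1) $G_0 := G \cap \mathrm{SO}(M_0) \subseteq \mathrm{SO}(M_{a,0}) \times \mathrm{SU}(\varphi_{b,0})$, and (2) the unipotent subgroup $U_{G,\nu}$ equals $U_{\mathrm{SO}(M_a),\nu} \times U_{\mathrm{SU}(\varphi_b),\nu}$ where $M_a = M_{a,0} \oplus B$, then either $M_{a,0} = 0$ and $G = \mathrm{SU}(\varphi_b)$, or $M_{b,0} = 0$ and $G = \mathrm{SO}(M)$. -/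

import Mathlib

section

variable {K M : Type*} [Field K] [AddCommGroup M] [Module K M]

/-- `x` is skew-adjoint with respect to the bilinear form `Bf`,
i.e. lies in the Lie algebra `so(M, Bf)`. -/
def SkewAdjEnd (Bf : M →ₗ[K] M →ₗ[K] K) (x : Module.End K M) : Prop :=
  ∀ u v : M, Bf (x u) v + Bf u (x v) = 0

/-- `x` lies in the sum of the positive weight spaces (weights `1` and `2`) for the
adjoint action of `D = dν`, i.e. in `Lie U_{ν}`. -/
def InPosPart (D x : Module.End K M) : Prop :=
  ⁅D, ⁅D, x⁆⁆ - (3 : K) • ⁅D, x⁆ + (2 : K) • x = 0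

end

set_option maxHeartbeats 1000000

section LieInst

attribute [local instance 100] LieRing.ofAssociativeRing

namespace L43

variable {K M : Type*} [Field K] [AddCommGroup M] [Module K M]
variable (Bf : M →ₗ[K] M →ₗ[K] K)

noncomputable def TT (u v : M) : Module.End K M :=
  ((Bf u).smulRight v) - ((Bf v).smulRight u)

lemma TT_apply (u v m : M) : TT Bf u v m = Bf u m • v - Bf v m • u := rfl

lemma TT_swap (u v : M) : TT Bf u v = - TT Bf v u := by
  ext m; simp [TT_apply]

lemma TT_add_left (u u' v : M) : TT Bf (u + u') v = TT Bf u v + TT Bf u' v := by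
  ext m; simp [TT_apply, add_smul]; module

lemma TT_sub_left (u u' v : M) : TT Bf (u - u') v = TT Bf u v - TT Bf u' v := by
  ext m; simp [TT_apply, sub_smul]; module

lemma TT_smul_left (c : K) (u v : M) : TT Bf (c • u) v = c • TT Bf u v := by
  ext m; simp [TT_apply, smul_smul, mul_comm]; module

lemma TT_zero_left (v : M) : TT Bf 0 v = 0 := by
  ext m; simp [TT_apply]

lemma TT_skew (hsymm : ∀ u v, Bf u v = Bf v u) (u v : M) : SkewAdjEnd Bf (TT Bf u v) := by
  intro x y
  simp only [TT_apply, map_sub, map_smul, LinearMap.sub_apply, LinearMap.smul_apply,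
    smul_eq_mul]
  rw [hsymm u x, hsymm v x]
  ring

lemma skew_add {x y : Module.End K M} (hx : SkewAdjEnd Bf x) (hy : SkewAdjEnd Bf y) :
    SkewAdjEnd Bf (x + y) := by
  intro u v
  simp only [LinearMap.add_apply, map_add]
  linear_combination hx u v + hy u v

lemma skew_smul {x : Module.End K M} (c : K) (hx : SkewAdjEnd Bf x) :
    SkewAdjEnd Bf (c • x) := by
  intro u v
  simp only [LinearMap.smul_apply, map_smul, smul_eq_mul]
  linear_combination c * hx u v

lemma skew_neg {x : Module.End K M} (hx : SkewAdjEnd Bf x) : SkewAdjEnd Bf (-x) := by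
  intro u v
  simp only [LinearMap.neg_apply, map_neg]
  linear_combination - hx u v

lemma skew_sub {x y : Module.End K M} (hx : SkewAdjEnd Bf x) (hy : SkewAdjEnd Bf y) :
    SkewAdjEnd Bf (x - y) := by
  rw [sub_eq_add_neg]; exact skew_add Bf hx (skew_neg Bf hy)

lemma skew_bracket {x y : Module.End K M} (hx : SkewAdjEnd Bf x) (hy : SkewAdjEnd Bf y) :
    SkewAdjEnd Bf ⁅x, y⁆ := by
  intro u v
  simp only [Ring.lie_def, LinearMap.sub_apply, Module.End.mul_apply, map_sub]
  linear_combination hx (y u) v - hy u (x v) - hy (x u) v + hx u (y v)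

end L43

namespace L43

variable {K M : Type*} [Field K] [CharZero K] [AddCommGroup M] [Module K M]

structure Setup (Bf : M →ₗ[K] M →ₗ[K] K) (w w' : M) (D : Module.End K M) : Prop where
  symm : ∀ u v, Bf u v = Bf v u
  hnd : ∀ u : M, (∀ v, Bf u v = 0) → u = 0
  ww : Bf w w = 0
  w'w' : Bf w' w' = 0
  ww' : Bf w w' = 1
  Dform : ∀ m, D m = Bf w m • w' - Bf w' m • w
  dec : ∀ m : M, ∃ m0, Bf w m0 = 0 ∧ Bf w' m0 = 0 ∧ m = Bf w' m • w + Bf w m • w' + m0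

variable {Bf : M →ₗ[K] M →ₗ[K] K} {w w' : M} {D : Module.End K M}

set_option linter.unusedSectionVars false

lemma half_zero {a : K} (h : a + a = 0) : a = 0 := by
  have h2 : (2:K) * a = 0 := by linear_combination h
  rcases mul_eq_zero.mp h2 with h' | h'
  · exact absurd h' two_ne_zero
  · exact h'

lemma eq_of_eq_neg {a : K} (h : a = -a) : a = 0 :=
  half_zero (by linear_combination h)

lemma Setup.w'w (S : Setup Bf w w' D) : Bf w' w = 1 := by rw [S.symm, S.ww']

lemma Setup.Dw (S : Setup Bf w w' D) : D w = -w := by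
  rw [S.Dform, S.ww, S.w'w]; simp

lemma Setup.Dw' (S : Setup Bf w w' D) : D w' = w' := by
  rw [S.Dform, S.ww', S.w'w']; simp

lemma Setup.Dorth (S : Setup Bf w w' D) {m : M} (h1 : Bf w m = 0) (h2 : Bf w' m = 0) :
    D m = 0 := by rw [S.Dform, h1, h2]; simp

lemma Setup.BfwD (S : Setup Bf w w' D) (m : M) : Bf w (D m) = Bf w m := by
  rw [S.Dform]; simp [S.ww, S.ww']

lemma Setup.Bfw'D (S : Setup Bf w w' D) (m : M) : Bf w' (D m) = - Bf w' m := by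
  rw [S.Dform]; simp [S.w'w, S.w'w']

lemma Setup.Dsq (S : Setup Bf w w' D) (m : M) : D (D m) = Bf w m • w' + Bf w' m • w := by
  rw [S.Dform m, map_sub, map_smul, map_smul, S.Dw, S.Dw']; module

lemma Setup.Dcube (S : Setup Bf w w' D) (m : M) : D (D (D m)) = D m := by
  rw [S.Dsq m, map_add, map_smul, map_smul, S.Dw, S.Dw', S.Dform m]; module

lemma Setup.eig_zero (S : Setup Bf w w' D) {c : K} (hc : c * c * c ≠ c) {v : M}
    (hv : D v = c • v) : v = 0 := by
  have h3 : D (D (D v)) = (c * c * c) • v := by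
    simp only [hv, map_smul, smul_smul]
  have := S.Dcube v
  rw [h3, hv] at this
  have : (c * c * c - c) • v = 0 := by rw [sub_smul, this, sub_self]
  rcases smul_eq_zero.mp this with h | h
  · exact absurd (sub_eq_zero.mp h) hc
  · exact h

lemma Setup.eig_one (S : Setup Bf w w' D) {v : M} (hv : D v = v) : v = Bf w v • w' := by
  have h2 : Bf w' v = 0 := by
    have := S.Bfw'D v; rw [hv] at this; exact eq_of_eq_neg this
  have := S.Dform v
  rw [hv, h2] at this
  simpa using this

lemma Setup.eig_neg_one (S : Setup Bf w w' D) {v : M} (hv : D v = -v) :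
    v = Bf w' v • w := by
  have h2 : Bf w v = 0 := by
    have := S.BfwD v; rw [hv, map_neg] at this
    exact eq_of_eq_neg (by linear_combination - this)
  have := S.Dform v
  rw [hv, h2] at this
  simp only [zero_smul, zero_sub, neg_inj] at this
  exact this

lemma Setup.eig_zero_orth (S : Setup Bf w w' D) {v : M} (hv : D v = 0) :
    Bf w v = 0 ∧ Bf w' v = 0 := by
  constructor
  · have := S.BfwD v; rw [hv, map_zero] at this; linear_combination - this
  · have := S.Bfw'D v; rw [hv, map_zero] at this; linear_combination this

lemma Setup.corner (S : Setup Bf w w' D) {z : Module.End K M} (hz : SkewAdjEnd Bf z) :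
    Bf w (z w) = 0 ∧ Bf w' (z w') = 0 := by
  constructor
  · have h := hz w w; rw [S.symm (z w) w] at h; exact half_zero h
  · have h := hz w' w'; rw [S.symm (z w') w'] at h; exact half_zero h

end L43

namespace L43

variable {K M : Type*} [Field K] [CharZero K] [AddCommGroup M] [Module K M]
variable {Bf : M →ₗ[K] M →ₗ[K] K} {w w' : M} {D : Module.End K M}

set_option linter.unusedSectionVars false

lemma Setup.Dskew (S : Setup Bf w w' D) : SkewAdjEnd Bf D := by
  intro u v
  rw [S.Dform u, S.Dform v, map_sub, map_smul, map_smul]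
  simp only [LinearMap.sub_apply, LinearMap.smul_apply, map_sub, map_smul, smul_eq_mul]
  rw [S.symm u w, S.symm u w']
  ring

lemma Setup.DDzw' (S : Setup Bf w w' D) {z : Module.End K M} (hz : SkewAdjEnd Bf z) :
    D (D (z w')) = D (z w') := by
  rw [S.Dsq (z w'), S.Dform (z w'), (S.corner hz).2]
  module

lemma Setup.DDzw (S : Setup Bf w w' D) {z : Module.End K M} (hz : SkewAdjEnd Bf z) :
    D (D (z w)) = - D (z w) := by
  rw [S.Dsq (z w), S.Dform (z w), (S.corner hz).1]
  module

lemma Setup.DzDD (S : Setup Bf w w' D) {z : Module.End K M} (hz : SkewAdjEnd Bf z) (m : M) :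
    D (z (D (D m))) = D (D (z (D m))) := by
  have h1 : D (z (D (D m))) = Bf w m • D (z w') + Bf w' m • D (z w) := by
    rw [S.Dsq m, map_add, map_smul, map_smul, map_add, map_smul, map_smul]
  have h2 : D (D (z (D m))) = Bf w m • D (D (z w')) - Bf w' m • D (D (z w)) := by
    rw [S.Dform m, map_sub, map_smul, map_smul, map_sub, map_smul, map_smul,
      map_sub, map_smul, map_smul]
  rw [h1, h2, S.DDzw' hz, S.DDzw hz]
  module

lemma Setup.s3 (S : Setup Bf w w' D) {z : Module.End K M} (hz : SkewAdjEnd Bf z) :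
    ⁅D, ⁅D, ⁅D, z⁆⁆⁆ = ⁅D, z⁆ := by
  ext m
  simp only [Ring.lie_def, LinearMap.sub_apply, Module.End.mul_apply, map_sub]
  rw [S.Dcube (z m), S.Dcube m, S.DzDD hz m]
  abel

/-- the weight `+1` component -/
noncomputable def zp (D z : Module.End K M) : Module.End K M :=
  (2⁻¹ : K) • (⁅D, ⁅D, z⁆⁆ + ⁅D, z⁆)

/-- the weight `-1` component -/
noncomputable def zm (D z : Module.End K M) : Module.End K M :=
  (2⁻¹ : K) • (⁅D, ⁅D, z⁆⁆ - ⁅D, z⁆)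

/-- the weight `0` component -/
noncomputable def z0 (D z : Module.End K M) : Module.End K M :=
  z - ⁅D, ⁅D, z⁆⁆

lemma zp_add_zm_add_z0 (D z : Module.End K M) : zp D z + zm D z + z0 D z = z := by
  unfold zp zm z0
  match_scalars <;> field_simp <;> ring

lemma Setup.lie_zp (S : Setup Bf w w' D) {z : Module.End K M} (hz : SkewAdjEnd Bf z) :
    ⁅D, zp D z⁆ = zp D z := by
  unfold zp
  rw [lie_smul, lie_add, S.s3 hz]
  module

lemma Setup.lie_zm (S : Setup Bf w w' D) {z : Module.End K M} (hz : SkewAdjEnd Bf z) :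
    ⁅D, zm D z⁆ = - zm D z := by
  unfold zm
  rw [lie_smul, lie_sub, S.s3 hz]
  module

lemma Setup.lie_z0 (S : Setup Bf w w' D) {z : Module.End K M} (hz : SkewAdjEnd Bf z) :
    ⁅D, z0 D z⁆ = 0 := by
  unfold z0
  rw [lie_sub, S.s3 hz, sub_self]

end L43

namespace L43

variable {K M : Type*} [Field K] [CharZero K] [AddCommGroup M] [Module K M]
variable {Bf : M →ₗ[K] M →ₗ[K] K} {w w' : M} {D : Module.End K M}

set_option linter.unusedSectionVars false

lemma Setup.end_ext (S : Setup Bf w w' D) {z z' : Module.End K M}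
    (h1 : z w = z' w) (h2 : z w' = z' w')
    (h3 : ∀ m, Bf w m = 0 → Bf w' m = 0 → z m = z' m) : z = z' := by
  ext m
  obtain ⟨m0, o1, o2, hm⟩ := S.dec m
  have e : ∀ y : Module.End K M, y m = Bf w' m • y w + Bf w m • y w' + y m0 := by
    intro y
    conv_lhs => rw [hm]
    rw [map_add, map_add, map_smul, map_smul]
  rw [e z, e z', h1, h2, h3 m0 o1 o2]

lemma Setup.lie_apply (S : Setup Bf w w' D) (x y : Module.End K M) (m : M) :
    ⁅x, y⁆ m = x (y m) - y (x m) := by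
  simp [Ring.lie_def, LinearMap.sub_apply, Module.End.mul_apply]

lemma Setup.weight_two_zero (S : Setup Bf w w' D) {z : Module.End K M}
    (hz : SkewAdjEnd Bf z) (h : ⁅D, z⁆ = (2:K) • z) : z = 0 := by
  have hbr : ∀ m, D (z m) = z (D m) + (2:K) • z m := by
    intro m
    have := DFunLike.congr_fun h m
    rw [S.lie_apply] at this
    simp only [LinearMap.smul_apply] at this
    linear_combination (norm := module) this
  have hzw' : z w' = 0 := by
    refine S.eig_zero (c := 3) (by norm_num) ?_
    have := hbr w'
    rw [S.Dw'] at this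
    rw [this]; module
  have hzm0 : ∀ m, Bf w m = 0 → Bf w' m = 0 → z m = 0 := by
    intro m o1 o2
    refine S.eig_zero (c := 2) (by norm_num) ?_
    have := hbr m
    rw [S.Dorth o1 o2, map_zero] at this
    rw [this]; module
  have hzw : z w = 0 := by
    apply S.hnd
    intro v
    obtain ⟨v0, o1, o2, hv⟩ := S.dec v
    have b1 : Bf (z w) w = 0 := by rw [S.symm]; exact (S.corner hz).1
    have b2 : Bf (z w) w' = 0 := by
      have := hz w w'
      rw [hzw'] at this
      simpa using this
    have b3 : Bf (z w) v0 = 0 := by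
      have := hz w v0
      rw [hzm0 v0 o1 o2] at this
      simpa using this
    conv_lhs => rw [hv]
    rw [map_add, map_add, map_smul, map_smul, b1, b2, b3]
    simp
  refine S.end_ext (z' := 0) ?_ ?_ ?_ <;> simp [hzw, hzw', hzm0]
  exact fun m o1 o2 => hzm0 m o1 o2

lemma Setup.weight_neg_two_zero (S : Setup Bf w w' D) {z : Module.End K M}
    (hz : SkewAdjEnd Bf z) (h : ⁅D, z⁆ = (-2:K) • z) : z = 0 := by
  have hbr : ∀ m, D (z m) = z (D m) + (-2:K) • z m := by
    intro m
    have := DFunLike.congr_fun h m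
    rw [S.lie_apply] at this
    simp only [LinearMap.smul_apply] at this
    linear_combination (norm := module) this
  have hzw : z w = 0 := by
    refine S.eig_zero (c := -3) (by norm_num) ?_
    have := hbr w
    rw [S.Dw, map_neg] at this
    rw [this]; module
  have hzm0 : ∀ m, Bf w m = 0 → Bf w' m = 0 → z m = 0 := by
    intro m o1 o2
    refine S.eig_zero (c := -2) (by norm_num) ?_
    have := hbr m
    rw [S.Dorth o1 o2, map_zero] at this
    rw [this]; module
  have hzw' : z w' = 0 := by
    apply S.hnd
    intro v
    obtain ⟨v0, o1, o2, hv⟩ := S.dec v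
    have b1 : Bf (z w') w' = 0 := by rw [S.symm]; exact (S.corner hz).2
    have b2 : Bf (z w') w = 0 := by
      have := hz w' w
      rw [hzw] at this
      simpa using this
    have b3 : Bf (z w') v0 = 0 := by
      have := hz w' v0
      rw [hzm0 v0 o1 o2] at this
      simpa using this
    conv_lhs => rw [hv]
    rw [map_add, map_add, map_smul, map_smul, b1, b2, b3]
    simp
  refine S.end_ext (z' := 0) ?_ ?_ ?_ <;> simp [hzw, hzw', hzm0]
  exact fun m o1 o2 => hzm0 m o1 o2

end L43

namespace L43

variable {K M : Type*} [Field K] [CharZero K] [AddCommGroup M] [Module K M]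
variable {Bf : M →ₗ[K] M →ₗ[K] K} {w w' : M} {D : Module.End K M}

set_option linter.unusedSectionVars false
set_option linter.unusedVariables false

lemma Setup.weight_one_struct (S : Setup Bf w w' D) {z : Module.End K M}
    (hz : SkewAdjEnd Bf z) (h : ⁅D, z⁆ = z) :
    z = TT Bf (-(z w)) w' ∧ Bf w (z w) = 0 ∧ Bf w' (z w) = 0 := by
  have hbr : ∀ m, D (z m) = z (D m) + z m := by
    intro m
    have := DFunLike.congr_fun h m
    rw [S.lie_apply] at this
    linear_combination (norm := module) this
  have hzw' : z w' = 0 := by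
    refine S.eig_zero (c := 2) (by norm_num) ?_
    have := hbr w'
    rw [S.Dw'] at this
    rw [this]; module
  have hDzw : D (z w) = 0 := by
    have := hbr w
    rw [S.Dw, map_neg] at this
    rw [this]; module
  obtain ⟨o1, o2⟩ := S.eig_zero_orth hDzw
  have hzm0 : ∀ m, Bf w m = 0 → Bf w' m = 0 → z m = Bf w (z m) • w' := by
    intro m p1 p2
    refine S.eig_one ?_
    have := hbr m
    rw [S.Dorth p1 p2, map_zero] at this
    rw [this]; module
  refine ⟨?_, o1, o2⟩
  refine S.end_ext ?_ ?_ ?_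
  · simp only [TT_apply, map_neg, LinearMap.neg_apply]
    rw [show Bf (z w) w = 0 from by rw [S.symm]; exact o1, S.w'w]
    simp
  · simp only [TT_apply, map_neg, LinearMap.neg_apply]
    rw [hzw', show Bf (z w) w' = 0 from by rw [S.symm]; exact o2, S.w'w']
    simp
  · intro m p1 p2
    simp only [TT_apply, map_neg, LinearMap.neg_apply]
    rw [hzm0 m p1 p2, p2]
    have h4 : Bf w (z m) = - Bf (z w) m := by
      have := hz w m; linear_combination this
    rw [h4]
    module

lemma Setup.weight_neg_one_struct (S : Setup Bf w w' D) {z : Module.End K M}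
    (hz : SkewAdjEnd Bf z) (h : ⁅D, z⁆ = -z) :
    z = TT Bf (-(z w')) w ∧ Bf w (z w') = 0 ∧ Bf w' (z w') = 0 := by
  have hbr : ∀ m, D (z m) = z (D m) - z m := by
    intro m
    have := DFunLike.congr_fun h m
    rw [S.lie_apply] at this
    simp only [LinearMap.neg_apply] at this
    linear_combination (norm := module) this
  have hzw : z w = 0 := by
    refine S.eig_zero (c := -2) (by norm_num) ?_
    have := hbr w
    rw [S.Dw, map_neg] at this
    rw [this]; module
  have hDzw' : D (z w') = 0 := by
    have := hbr w'
    rw [S.Dw'] at this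
    rw [this]; module
  obtain ⟨o1, o2⟩ := S.eig_zero_orth hDzw'
  have hzm0 : ∀ m, Bf w m = 0 → Bf w' m = 0 → z m = Bf w' (z m) • w := by
    intro m p1 p2
    refine S.eig_neg_one ?_
    have := hbr m
    rw [S.Dorth p1 p2, map_zero] at this
    rw [this]; module
  refine ⟨?_, o1, o2⟩
  refine S.end_ext ?_ ?_ ?_
  · simp only [TT_apply, map_neg, LinearMap.neg_apply]
    rw [hzw, show Bf (z w') w = 0 from by rw [S.symm]; exact o1, S.ww]
    simp
  · simp only [TT_apply, map_neg, LinearMap.neg_apply]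
    rw [show Bf (z w') w' = 0 from by rw [S.symm]; exact o2, S.ww']
    simp
  · intro m p1 p2
    simp only [TT_apply, map_neg, LinearMap.neg_apply]
    rw [hzm0 m p1 p2, p1]
    have h4 : Bf w' (z m) = - Bf (z w') m := by
      have := hz w' m; linear_combination this
    rw [h4]
    module

lemma Setup.weight_zero_struct (S : Setup Bf w w' D) {z : Module.End K M}
    (hz : SkewAdjEnd Bf z) (h : ⁅D, z⁆ = 0) :
    z w = Bf w' (z w) • w ∧ z w' = - Bf w' (z w) • w' ∧
      (∀ m, Bf w m = 0 → Bf w' m = 0 → Bf w (z m) = 0 ∧ Bf w' (z m) = 0) := by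
  have hbr : ∀ m, D (z m) = z (D m) := by
    intro m
    have := DFunLike.congr_fun h m
    rw [S.lie_apply] at this
    simp only [LinearMap.zero_apply] at this
    linear_combination (norm := module) this
  have h1 : z w = Bf w' (z w) • w := by
    refine S.eig_neg_one ?_
    have := hbr w
    rw [S.Dw, map_neg] at this
    rw [this]
  have h2' : z w' = Bf w (z w') • w' := by
    refine S.eig_one ?_
    have := hbr w'
    rw [S.Dw'] at this
    rw [this]
  have hco : Bf w (z w') = - Bf w' (z w) := by
    have e := hz w w'
    have : Bf (z w) w' = Bf w' (z w) := S.symm _ _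
    linear_combination e - this
  refine ⟨h1, by rw [h2', hco]; try module, ?_⟩
  intro m p1 p2
  have : D (z m) = 0 := by rw [hbr m, S.Dorth p1 p2, map_zero]
  exact S.eig_zero_orth this

lemma inpos_zero (D : Module.End K M) : InPosPart D (0 : Module.End K M) := by
  simp [InPosPart]

lemma inpos_of_weight_one {D z : Module.End K M} (h : ⁅D, z⁆ = z) : InPosPart D z := by
  rw [InPosPart, h, h]
  module

lemma Setup.weight_one_of_inpos (S : Setup Bf w w' D) {z : Module.End K M}
    (hz : SkewAdjEnd Bf z) (h : InPosPart D z) : ⁅D, z⁆ = z := by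
  have hy : ⁅D, ⁅D, z⁆ - z⁆ = (2:K) • (⁅D, z⁆ - z) := by
    rw [InPosPart] at h
    rw [lie_sub]
    linear_combination (norm := module) h
  have hskew : SkewAdjEnd Bf (⁅D, z⁆ - z) :=
    skew_sub Bf (skew_bracket Bf S.Dskew hz) hz
  have := S.weight_two_zero hskew hy
  rw [sub_eq_zero] at this
  exact this

end L43

namespace L43

variable {K M : Type*} [Field K] [CharZero K] [AddCommGroup M] [Module K M]
variable {Bf : M →ₗ[K] M →ₗ[K] K} {w w' : M} {D : Module.End K M}

set_option linter.unusedSectionVars false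
set_option linter.unusedVariables false

lemma Setup.TTw_apply_w' (S : Setup Bf w w' D) {v : M} (h1 : Bf w v = 0)
    (h2 : Bf w' v = 0) : TT Bf v w w' = -v := by
  rw [TT_apply, show Bf v w' = 0 from by rw [S.symm]; exact h2, S.ww']
  simp

lemma Setup.TTw'_apply_w (S : Setup Bf w w' D) {u : M} (h1 : Bf w u = 0)
    (h2 : Bf w' u = 0) : TT Bf u w' w = -u := by
  rw [TT_apply, show Bf u w = 0 from by rw [S.symm]; exact h1, S.w'w]
  simp

lemma Setup.lie_D_TTw' (S : Setup Bf w w' D) {u : M} (h1 : Bf w u = 0) (h2 : Bf w' u = 0) :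
    ⁅D, TT Bf u w'⁆ = TT Bf u w' := by
  ext m
  rw [S.lie_apply]
  simp only [TT_apply, map_sub, map_smul]
  rw [S.Dorth h1 h2, S.Dw',
    show Bf u (D m) = 0 from by
      rw [S.Dform m]; simp only [map_sub, map_smul, smul_eq_mul]
      rw [show Bf u w' = 0 from by rw [S.symm]; exact h2,
        show Bf u w = 0 from by rw [S.symm]; exact h1]; ring,
    S.Bfw'D m]
  module

lemma Setup.lie_D_TTw (S : Setup Bf w w' D) {v : M} (h1 : Bf w v = 0) (h2 : Bf w' v = 0) :
    ⁅D, TT Bf v w⁆ = - TT Bf v w := by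
  ext m
  rw [S.lie_apply]
  simp only [TT_apply, map_sub, map_smul, LinearMap.neg_apply]
  rw [S.Dorth h1 h2, S.Dw,
    show Bf v (D m) = 0 from by
      rw [S.Dform m]; simp only [map_sub, map_smul, smul_eq_mul]
      rw [show Bf v w' = 0 from by rw [S.symm]; exact h2,
        show Bf v w = 0 from by rw [S.symm]; exact h1]; ring,
    S.BfwD m]
  module

lemma Setup.lie_skew_TTw (S : Setup Bf w w' D) {x : Module.End K M} {v : M}
    (hx : SkewAdjEnd Bf x) (hxw : x w = 0) : ⁅x, TT Bf v w⁆ = TT Bf (x v) w := by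
  ext m
  rw [S.lie_apply]
  simp only [TT_apply, map_sub, map_smul]
  rw [hxw,
    show Bf v (x m) = - Bf (x v) m from by have := hx v m; linear_combination this,
    show Bf w (x m) = 0 from by
      have := hx w m; rw [hxw] at this; simpa using this]
  module

lemma Setup.lie_skew_TTw' (S : Setup Bf w w' D) {x : Module.End K M} {u : M}
    (hx : SkewAdjEnd Bf x) (hxw' : x w' = 0) : ⁅x, TT Bf u w'⁆ = TT Bf (x u) w' := by
  ext m
  rw [S.lie_apply]
  simp only [TT_apply, map_sub, map_smul]
  rw [hxw',
    show Bf u (x m) = - Bf (x u) m from by have := hx u m; linear_combination this,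
    show Bf w' (x m) = 0 from by
      have := hx w' m; rw [hxw'] at this; simpa using this]
  module

lemma Setup.lie_TTw'_TTw (S : Setup Bf w w' D) {u v : M}
    (hu1 : Bf w u = 0) (hu2 : Bf w' u = 0) (hv1 : Bf w v = 0) (hv2 : Bf w' v = 0) :
    ⁅TT Bf u w', TT Bf v w⁆ = TT Bf u v - Bf u v • D := by
  have bu1 : Bf u w = 0 := by rw [S.symm]; exact hu1
  have bu2 : Bf u w' = 0 := by rw [S.symm]; exact hu2
  have bv1 : Bf v w = 0 := by rw [S.symm]; exact hv1
  have bv2 : Bf v w' = 0 := by rw [S.symm]; exact hv2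
  ext m
  rw [S.lie_apply]
  simp only [TT_apply, LinearMap.sub_apply, LinearMap.smul_apply, map_sub, map_smul,
    smul_eq_mul]
  rw [S.Dform m, bu1, bv2, hv2, hu1, S.ww', S.w'w, S.symm v u]
  module

lemma Setup.lie_D_TT0 (S : Setup Bf w w' D) {u v : M}
    (hu1 : Bf w u = 0) (hu2 : Bf w' u = 0) (hv1 : Bf w v = 0) (hv2 : Bf w' v = 0) :
    ⁅D, TT Bf u v⁆ = 0 := by
  have bu1 : Bf u w = 0 := by rw [S.symm]; exact hu1
  have bu2 : Bf u w' = 0 := by rw [S.symm]; exact hu2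
  have bv1 : Bf v w = 0 := by rw [S.symm]; exact hv1
  have bv2 : Bf v w' = 0 := by rw [S.symm]; exact hv2
  ext m
  rw [S.lie_apply]
  simp only [TT_apply, map_sub, map_smul, LinearMap.zero_apply]
  rw [S.Dorth hu1 hu2, S.Dorth hv1 hv2,
    show Bf u (D m) = 0 from by
      rw [S.Dform m]; simp only [map_sub, map_smul, smul_eq_mul]; rw [bu1, bu2]; ring,
    show Bf v (D m) = 0 from by
      rw [S.Dform m]; simp only [map_sub, map_smul, smul_eq_mul]; rw [bv1, bv2]; ring]
  module

end L43

namespace L43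

variable {K M : Type*} [Field K] [AddCommGroup M] [Module K M]

set_option linter.unusedSectionVars false

lemma exists_dual_pair [FiniteDimensional K M] (Bf : M →ₗ[K] M →ₗ[K] K)
    (hsymm : ∀ u v, Bf u v = Bf v u) (Q Q' : Submodule K M)
    (hND1 : ∀ u ∈ Q, (∀ y ∈ Q', Bf u y = 0) → u = 0)
    (hND2 : ∀ y ∈ Q', (∀ u ∈ Q, Bf u y = 0) → y = 0) :
    ∃ (n : ℕ) (b f : Fin n → M), (∀ i, b i ∈ Q) ∧ (∀ i, f i ∈ Q') ∧
      (∀ m ∈ Q, m = ∑ i, Bf (f i) m • b i) ∧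
      (∀ m ∈ Q', m = ∑ i, Bf (b i) m • f i) := by
  classical
  let bV : Module.Basis (Fin (Module.finrank K ↥Q)) K ↥Q := Module.finBasis K ↥Q
  let Φ : ↥Q' →ₗ[K] Module.Dual K ↥Q :=
    { toFun := fun u => (Bf u.1).comp Q.subtype
      map_add' := by intro a b; ext v; simp
      map_smul' := by intro c a; ext v; simp }
  let Ψ : ↥Q →ₗ[K] Module.Dual K ↥Q' :=
    { toFun := fun u => (Bf u.1).comp Q'.subtype
      map_add' := by intro a b; ext v; simp
      map_smul' := by intro c a; ext v; simp }
  have hΦinj : Function.Injective Φ := by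
    rw [← LinearMap.ker_eq_bot, eq_bot_iff]
    intro u hu
    have h1 : ∀ v ∈ Q, Bf v u.1 = 0 := by
      intro v hv
      have := DFunLike.congr_fun (LinearMap.mem_ker.mp hu) ⟨v, hv⟩
      rw [hsymm]
      simpa [Φ] using this
    exact (Submodule.mem_bot K).mpr (Subtype.ext (hND2 u.1 u.2 h1))
  have hΨinj : Function.Injective Ψ := by
    rw [← LinearMap.ker_eq_bot, eq_bot_iff]
    intro u hu
    have h1 : ∀ v ∈ Q', Bf u.1 v = 0 := by
      intro v hv
      have := DFunLike.congr_fun (LinearMap.mem_ker.mp hu) ⟨v, hv⟩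
      simpa [Ψ] using this
    exact (Submodule.mem_bot K).mpr (Subtype.ext (hND1 u.1 u.2 h1))
  have hrk : Module.finrank K ↥Q' = Module.finrank K ↥Q := by
    refine le_antisymm ?_ ?_
    · have := LinearMap.finrank_le_finrank_of_injective hΦinj
      rwa [Subspace.dual_finrank_eq] at this
    · have := LinearMap.finrank_le_finrank_of_injective hΨinj
      rwa [Subspace.dual_finrank_eq] at this
  have hΦsurj : Function.Surjective Φ :=
    (LinearMap.injective_iff_surjective_of_finrank_eq_finrank
      (by rw [Subspace.dual_finrank_eq, hrk])).mp hΦinj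
  let e : ↥Q' ≃ₗ[K] Module.Dual K ↥Q := LinearEquiv.ofBijective Φ ⟨hΦinj, hΦsurj⟩
  let fV : Fin (Module.finrank K ↥Q) → ↥Q' := fun i => e.symm (bV.coord i)
  have hΦf : ∀ i, Φ (fV i) = bV.coord i := fun i => e.apply_symm_apply (bV.coord i)
  have hcoef : ∀ i, ∀ m : ↥Q, Bf (fV i).1 m.1 = bV.repr m i := by
    intro i m
    have h2 := DFunLike.congr_fun (hΦf i) m
    rw [Module.Basis.coord_apply] at h2
    exact h2
  refine ⟨Module.finrank K ↥Q, fun i => (bV i).1, fun i => (fV i).1,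
    fun i => (bV i).2, fun i => (fV i).2, ?_, ?_⟩
  · intro m hm
    have h1 : (⟨m, hm⟩ : ↥Q) = ∑ i, bV.repr ⟨m, hm⟩ i • bV i := (bV.sum_repr ⟨m, hm⟩).symm
    have h2 := congrArg Q.subtype h1
    simp only [map_sum, map_smul, Submodule.coe_subtype] at h2
    conv_lhs => rw [h2]
    refine Finset.sum_congr rfl ?_
    intro i _
    have hc : (bV.repr ⟨m, hm⟩) i = Bf (fV i).1 m := (hcoef i ⟨m, hm⟩).symm
    rw [hc]
  · intro m hm
    have key : ∀ x : M, x ∈ Q' → (∀ j, Bf ((bV j).1) x = 0) → x = 0 := by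
      intro x hx hbase
      refine hND2 x hx ?_
      intro u hu
      have h1 : (⟨u, hu⟩ : ↥Q) = ∑ i, bV.repr ⟨u, hu⟩ i • bV i := (bV.sum_repr ⟨u, hu⟩).symm
      have h2 := congrArg Q.subtype h1
      simp only [map_sum, map_smul, Submodule.coe_subtype] at h2
      rw [h2, map_sum, LinearMap.sum_apply]
      refine Finset.sum_eq_zero ?_
      intro i _
      rw [map_smul, LinearMap.smul_apply, hbase i, smul_zero]
    set y : M := ∑ i, Bf ((bV i).1) m • (fV i).1 with hy
    have hyQ' : y ∈ Q' := Submodule.sum_mem _ (fun i _ => Submodule.smul_mem _ _ (fV i).2)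
    have hsub : y - m = 0 := by
      refine key _ (sub_mem hyQ' hm) ?_
      intro j
      rw [map_sub, hy, map_sum]
      have h3 : ∀ i, Bf ((bV j).1) (Bf ((bV i).1) m • (fV i).1) =
          Bf ((bV i).1) m * Bf ((fV i).1) ((bV j).1) := by
        intro i
        rw [map_smul, smul_eq_mul, hsymm ((bV j).1) ((fV i).1)]
      have h4 : ∀ i, Bf ((fV i).1) ((bV j).1) = bV.repr (bV j) i := fun i => hcoef i (bV j)
      have h5 : (∑ i, Bf ((bV j).1) (Bf ((bV i).1) m • (fV i).1)) = Bf ((bV j).1) m := by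
        calc (∑ i, Bf ((bV j).1) (Bf ((bV i).1) m • (fV i).1))
            = ∑ i, Bf ((bV i).1) m * bV.repr (bV j) i := by
              refine Finset.sum_congr rfl fun i _ => ?_
              rw [h3 i, h4 i]
          _ = Bf ((bV j).1) m := by
              rw [bV.repr_self]
              simp [Finsupp.single_apply]
      rw [h5, sub_self]
    have := sub_eq_zero.mp hsub
    exact this.symm

end L43

end LieInst


open L43 in
/-- (Lemma 4.3 of the paper, Lie-algebra formulation.)  Let `(M, Q')` be a nondegenerate
quadratic space over an algebraically closed field of characteristic `0` with orthogonal
decomposition `M = M_{a,0} ⊕ M_{b,0} ⊕ B`, `B` a hyperbolic plane with isotropic basis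
`w, w'`, and `ν(t) = diag(t⁻¹, 1, …, 1, t)` with derivative `D`.  Suppose
`M_b = M_{b,0} ⊕ B` carries a (split) Hermitian structure respecting `Q'|_{M_b}`, given by
mutually dual maximal totally isotropic subspaces `W_b ∋ w` and `W_b' ∋ w'`.  If
`g ⊆ so(M)` is a (connected) reductive subalgebra containing `D` such that
(1) its Levi part relative to `D` lies in `K·D ⊕ so(M_{a,0}) ⊕ su(φ_{b,0})`, and
(2) its positive unipotent part equals `Lie U_{SO(M_a), ν} ⊕ Lie U_{SU(φ_b), ν}`,
then either `M_{a,0} = 0` and `g = su(φ_b)`, or `M_{b,0} = 0` and `g = so(M)`. -/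
theorem stmt_16 {K M : Type*} [Field K] [IsAlgClosed K] [CharZero K]
    [AddCommGroup M] [Module K M] [FiniteDimensional K M]
    (Bf : M →ₗ[K] M →ₗ[K] K) (hsymm : ∀ u v, Bf u v = Bf v u)
    (hnd : ∀ u : M, (∀ v, Bf u v = 0) → u = 0)
    (Ma0 Mb0 : Submodule K M) (w w' : M)
    (hww : Bf w w = 0) (hw'w' : Bf w' w' = 0) (hww' : Bf w w' = 1)
    (horta : ∀ v ∈ Ma0, Bf w v = 0 ∧ Bf w' v = 0)
    (hortb : ∀ v ∈ Mb0, Bf w v = 0 ∧ Bf w' v = 0)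
    (hortab : ∀ va ∈ Ma0, ∀ vb ∈ Mb0, Bf va vb = 0)
    (hdisj : Disjoint Ma0 Mb0)
    (hcompl : IsCompl (Submodule.span K {w, w'}) (Ma0 ⊔ Mb0))
    -- the Hermitian structure on `M_b`: mutually dual maximal isotropic subspaces
    (Wb Wb' : Submodule K M)
    (hwWb : w ∈ Wb) (hw'Wb' : w' ∈ Wb')
    (hWbiso : ∀ x ∈ Wb, ∀ y ∈ Wb, Bf x y = 0)
    (hWb'iso : ∀ x ∈ Wb', ∀ y ∈ Wb', Bf x y = 0)
    (hWbdisj : Disjoint Wb Wb')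
    (hWbsum : Wb ⊔ Wb' = Submodule.span K {w, w'} ⊔ Mb0)
    (hWb0 : Wb = (Wb ⊓ Mb0) ⊔ Submodule.span K {w})
    (hWb'0 : Wb' = (Wb' ⊓ Mb0) ⊔ Submodule.span K {w'})
    -- the derivative `D` of the cocharacter `ν`
    (D : Module.End K M) (hDw : D w = -w) (hDw' : D w' = w')
    (hDa : ∀ v ∈ Ma0, D v = 0) (hDb : ∀ v ∈ Mb0, D v = 0)
    -- `g` is a reductive Lie subalgebra of `so(M)` containing `im ν`
    (g : Submodule K (Module.End K M))
    (hgbracket : ∀ x ∈ g, ∀ y ∈ g, ⁅x, y⁆ ∈ g)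
    (hgso : ∀ x ∈ g, SkewAdjEnd Bf x)
    (hDg : D ∈ g)
    (hred : ∀ N : Submodule K M, (∀ x ∈ g, ∀ v ∈ N, x v ∈ N) →
      ∃ N' : Submodule K M, IsCompl N N' ∧ ∀ x ∈ g, ∀ v ∈ N', x v ∈ N')
    -- (1) the Levi of `g` relative to `ν` lies in `K·D ⊕ so(M_{a,0}) ⊕ su(φ_{b,0})`
    (hLevi : ∀ x ∈ g, ⁅D, x⁆ = 0 →
      ∃ c : K, ∃ xa ∈ {y : Module.End K M | SkewAdjEnd Bf y ∧ (∀ v ∈ Mb0, y v = 0) ∧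
          y w = 0 ∧ y w' = 0 ∧ ∀ v ∈ Ma0, y v ∈ Ma0},
        ∃ xb ∈ {y : Module.End K M | SkewAdjEnd Bf y ∧ (∀ v ∈ Ma0, y v = 0) ∧
          y w = 0 ∧ y w' = 0 ∧ (∀ v ∈ Wb ⊓ Mb0, y v ∈ Wb ⊓ Mb0) ∧
          ∀ v ∈ Wb' ⊓ Mb0, y v ∈ Wb' ⊓ Mb0},
        x = c • D + xa + xb)
    -- (2) the unipotent part of `g` is `Lie U_{SO(M_a),ν} ⊕ Lie U_{SU(φ_b),ν}`
    (hU : {x : Module.End K M | x ∈ g ∧ InPosPart D x} =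
      {x : Module.End K M | ∃ xa ∈ {y : Module.End K M | SkewAdjEnd Bf y ∧ InPosPart D y ∧
          (∀ v ∈ Mb0, y v = 0) ∧ ∀ v : M, y v ∈ Ma0 ⊔ Submodule.span K {w, w'}},
        ∃ xb ∈ {y : Module.End K M | SkewAdjEnd Bf y ∧ InPosPart D y ∧
          (∀ v ∈ Wb, y v ∈ Wb) ∧ (∀ v ∈ Wb', y v ∈ Wb') ∧ ∀ v ∈ Ma0, y v = 0},
        x = xa + xb}) :
    (Ma0 = ⊥ ∧ (g : Set (Module.End K M)) =
        {y : Module.End K M | SkewAdjEnd Bf y ∧ (∀ v ∈ Wb, y v ∈ Wb) ∧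
          (∀ v ∈ Wb', y v ∈ Wb') ∧ ∀ v ∈ Ma0, y v = 0}) ∨
    (Mb0 = ⊥ ∧ (g : Set (Module.End K M)) = {y : Module.End K M | SkewAdjEnd Bf y}) := by
  classical
  letI : LieRing (Module.End K M) := LieRing.ofAssociativeRing
  -- ===== Part A : infrastructure =====
  have htop : Submodule.span K {w, w'} ⊔ (Ma0 ⊔ Mb0) = ⊤ := codisjoint_iff.mp hcompl.codisjoint
  have horth : ∀ m ∈ Ma0 ⊔ Mb0, Bf w m = 0 ∧ Bf w' m = 0 := by
    intro m hm
    rcases Submodule.mem_sup.mp hm with ⟨a, ha, b, hb, rfl⟩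
    constructor
    · rw [map_add, (horta a ha).1, (hortb b hb).1, add_zero]
    · rw [map_add, (horta a ha).2, (hortb b hb).2, add_zero]
  have hD0 : ∀ m ∈ Ma0 ⊔ Mb0, D m = 0 := by
    intro m hm
    rcases Submodule.mem_sup.mp hm with ⟨a, ha, b, hb, rfl⟩
    rw [map_add, hDa a ha, hDb b hb, add_zero]
  have hw'w : Bf w' w = 1 := by rw [hsymm]; exact hww'
  have hdecomp : ∀ m : M, ∃ m0 ∈ Ma0 ⊔ Mb0, m = Bf w' m • w + Bf w m • w' + m0 := by
    intro m
    have hm : m ∈ Submodule.span K {w, w'} ⊔ (Ma0 ⊔ Mb0) := by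
      rw [htop]; exact Submodule.mem_top
    rcases Submodule.mem_sup.mp hm with ⟨s, hs, m0, hm0, hsum⟩
    rcases Submodule.mem_span_pair.mp hs with ⟨a, b, rfl⟩
    refine ⟨m0, hm0, ?_⟩
    have e1 : Bf w m = b := by
      rw [← hsum]
      simp [map_add, map_smul, hww, hww', (horth m0 hm0).1]
    have e2 : Bf w' m = a := by
      rw [← hsum]
      simp [map_add, map_smul, hw'w', hw'w, (horth m0 hm0).2]
    rw [e1, e2]; exact hsum.symm
  have S : L43.Setup Bf w w' D := by
    refine ⟨hsymm, hnd, hww, hw'w', hww', ?_, ?_⟩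
    · intro m
      obtain ⟨m0, hm0, hm⟩ := hdecomp m
      conv_lhs => rw [hm]
      rw [map_add, map_add, map_smul, map_smul, hD0 m0 hm0, hDw, hDw']
      module
    · intro m
      obtain ⟨m0, hm0, hm⟩ := hdecomp m
      exact ⟨m0, (horth m0 hm0).1, (horth m0 hm0).2, hm⟩
  -- orth vector is in M0
  have hmem0 : ∀ m : M, Bf w m = 0 → Bf w' m = 0 → m ∈ Ma0 ⊔ Mb0 := by
    intro m o1 o2
    obtain ⟨m0, hm0, hm⟩ := hdecomp m
    rw [o1, o2] at hm
    simp only [zero_smul, zero_add, add_zero] at hm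
    rw [hm]; exact hm0
  -- components of g elements
  have hcomp_mem : ∀ z ∈ g, L43.zp D z ∈ g ∧ L43.zm D z ∈ g ∧ L43.z0 D z ∈ g := by
    intro z hz
    have h1 : ⁅D, z⁆ ∈ g := hgbracket D hDg z hz
    have h2 : ⁅D, ⁅D, z⁆⁆ ∈ g := hgbracket D hDg _ h1
    exact ⟨Submodule.smul_mem _ _ (add_mem h2 h1), Submodule.smul_mem _ _ (sub_mem h2 h1),
      sub_mem hz h2⟩
  -- intersection lemmas
  have hint1 : ∀ x : M, x ∈ Ma0 ⊔ Submodule.span K {w, w'} → x ∈ Ma0 ⊔ Mb0 → x ∈ Ma0 := by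
    intro x h1 h2
    rcases Submodule.mem_sup.mp h1 with ⟨va, hva, s, hs, rfl⟩
    have hsm : s ∈ Ma0 ⊔ Mb0 := by
      have : s = (va + s) - va := by abel
      rw [this]
      exact sub_mem h2 (le_sup_left (a := Ma0) (b := Mb0) hva)
    have : s ∈ Submodule.span K {w, w'} ⊓ (Ma0 ⊔ Mb0) := ⟨hs, hsm⟩
    rw [disjoint_iff.mp hcompl.disjoint] at this
    rw [(Submodule.mem_bot K).mp this, add_zero]
    exact hva
  have hint2 : ∀ x : M, x ∈ Submodule.span K {w, w'} → x ∈ Ma0 ⊔ Mb0 → x = 0 := by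
    intro x h1 h2
    have : x ∈ Submodule.span K {w, w'} ⊓ (Ma0 ⊔ Mb0) := ⟨h1, h2⟩
    rw [disjoint_iff.mp hcompl.disjoint] at this
    exact (Submodule.mem_bot K).mp this
  have hWbMb : ∀ x : M, x ∈ Wb → x ∈ Ma0 ⊔ Mb0 → x ∈ Wb ⊓ Mb0 := by
    intro x h1 h2
    refine ⟨h1, ?_⟩
    have : x ∈ Wb ⊔ Wb' := le_sup_left (a := Wb) (b := Wb') h1
    rw [hWbsum] at this
    rcases Submodule.mem_sup.mp this with ⟨s, hs, vb, hvb, hsum⟩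
    have : s = 0 := by
      refine hint2 s hs ?_
      have : s = x - vb := by rw [← hsum]; abel
      rw [this]
      exact sub_mem h2 (le_sup_right (a := Ma0) (b := Mb0) hvb)
    rw [← hsum, this, zero_add]
    exact hvb
  have hWb'Mb : ∀ x : M, x ∈ Wb' → x ∈ Ma0 ⊔ Mb0 → x ∈ Wb' ⊓ Mb0 := by
    intro x h1 h2
    refine ⟨h1, ?_⟩
    have : x ∈ Wb ⊔ Wb' := le_sup_right (a := Wb) (b := Wb') h1
    rw [hWbsum] at this
    rcases Submodule.mem_sup.mp this with ⟨s, hs, vb, hvb, hsum⟩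
    have : s = 0 := by
      refine hint2 s hs ?_
      have : s = x - vb := by rw [← hsum]; abel
      rw [this]
      exact sub_mem h2 (le_sup_right (a := Ma0) (b := Mb0) hvb)
    rw [← hsum, this, zero_add]
    exact hvb
  -- Mb0 splits
  have hMbsplit : ∀ v ∈ Mb0, ∃ x ∈ Wb ⊓ Mb0, ∃ y ∈ Wb' ⊓ Mb0, v = x + y := by
    intro v hv
    have h1 : v ∈ Wb ⊔ Wb' := by
      rw [hWbsum]
      exact le_sup_right (a := Submodule.span K {w, w'}) (b := Mb0) hv
    rcases Submodule.mem_sup.mp h1 with ⟨x, hx, y, hy, hsum⟩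
    rw [hWb0] at hx
    rcases Submodule.mem_sup.mp hx with ⟨x0, hx0, sw, hsw, hx'⟩
    rw [hWb'0] at hy
    rcases Submodule.mem_sup.mp hy with ⟨y0, hy0, sw', hsw', hy'⟩
    rcases Submodule.mem_span_singleton.mp hsw with ⟨a, rfl⟩
    rcases Submodule.mem_span_singleton.mp hsw' with ⟨b, rfl⟩
    have hz : a • w + b • w' = 0 := by
      refine hint2 _ (Submodule.mem_span_pair.mpr ⟨a, b, rfl⟩) ?_
      have he : a • w + b • w' = v - x0 - y0 := by
        rw [← hsum, ← hx', ← hy']; abel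
      rw [he]
      exact sub_mem (sub_mem (le_sup_right (a := Ma0) (b := Mb0) hv)
        (le_sup_right (a := Ma0) (b := Mb0) hx0.2)) (le_sup_right (a := Ma0) (b := Mb0) hy0.2)
    refine ⟨x0, hx0, y0, hy0, ?_⟩
    rw [← hsum, ← hx', ← hy']
    have : x0 + a • w + (y0 + b • w') = x0 + y0 + (a • w + b • w') := by abel
    rw [this, hz, add_zero]
  -- nondegeneracy lemmas
  have NDa : ∀ u ∈ Ma0, (∀ v ∈ Ma0, Bf u v = 0) → u = 0 := by
    intro u hu h
    apply hnd
    intro v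
    obtain ⟨v0, hv0, hv⟩ := hdecomp v
    rcases Submodule.mem_sup.mp hv0 with ⟨va, hva, vb, hvb, rfl⟩
    have b1 : Bf u w = 0 := by rw [hsymm]; exact (horta u hu).1
    have b2 : Bf u w' = 0 := by rw [hsymm]; exact (horta u hu).2
    conv_lhs => rw [hv]
    rw [map_add, map_add, map_smul, map_smul, b1, b2, map_add, h va hva,
      hortab u hu vb hvb]
    simp
  have NDb : ∀ u ∈ Mb0, (∀ v ∈ Mb0, Bf u v = 0) → u = 0 := by
    intro u hu h
    apply hnd
    intro v
    obtain ⟨v0, hv0, hv⟩ := hdecomp v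
    rcases Submodule.mem_sup.mp hv0 with ⟨va, hva, vb, hvb, rfl⟩
    have b1 : Bf u w = 0 := by rw [hsymm]; exact (hortb u hu).1
    have b2 : Bf u w' = 0 := by rw [hsymm]; exact (hortb u hu).2
    have b3 : Bf u va = 0 := by rw [hsymm]; exact hortab va hva u hu
    conv_lhs => rw [hv]
    rw [map_add, map_add, map_smul, map_smul, b1, b2, map_add, b3, h vb hvb]
    simp
  have NDpair : ∀ u ∈ Wb ⊓ Mb0, (∀ y ∈ Wb' ⊓ Mb0, Bf u y = 0) → u = 0 := by
    intro u hu h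
    refine NDb u hu.2 ?_
    intro v hv
    obtain ⟨x0, hx0, y0, hy0, rfl⟩ := hMbsplit v hv
    rw [map_add, hWbiso u hu.1 x0 hx0.1, h y0 hy0, add_zero]
  have NDpair' : ∀ y ∈ Wb' ⊓ Mb0, (∀ u ∈ Wb ⊓ Mb0, Bf u y = 0) → y = 0 := by
    intro u hu h
    refine NDb u hu.2 ?_
    intro v hv
    obtain ⟨x0, hx0, y0, hy0, rfl⟩ := hMbsplit v hv
    rw [map_add, hWb'iso u hu.1 y0 hy0.1, add_zero, hsymm]
    exact h x0 hx0
  have skew0 : SkewAdjEnd Bf (0 : Module.End K M) := by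
    intro u v; simp
  -- hU : membership direction
  have hUmem1 : ∀ u ∈ Ma0, TT Bf u w' ∈ g := by
    intro u hu
    have o1 : Bf w u = 0 := (horta u hu).1
    have o2 : Bf w' u = 0 := (horta u hu).2
    have hw1 : ⁅D, TT Bf u w'⁆ = TT Bf u w' := S.lie_D_TTw' o1 o2
    have hmem : TT Bf u w' ∈ {x : Module.End K M | x ∈ g ∧ InPosPart D x} := by
      rw [hU]
      refine ⟨TT Bf u w', ⟨TT_skew Bf hsymm u w', inpos_of_weight_one hw1, ?_, ?_⟩,
        0, ⟨skew0, inpos_zero D, ?_, ?_, ?_⟩, (add_zero _).symm⟩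
      · intro v hv
        rw [TT_apply, hortab u hu v hv, (hortb v hv).2]
        simp
      · intro v
        rw [TT_apply]
        refine sub_mem ?_ ?_
        · exact Submodule.smul_mem _ _ (le_sup_right (a := Ma0)
            (Submodule.subset_span (show w' ∈ ({w, w'} : Set M) from by simp)))
        · exact Submodule.smul_mem _ _ (le_sup_left (b := Submodule.span K {w, w'}) hu)
      · intro v hv; simp
      · intro v hv; simp
      · intro v hv; simp
    exact hmem.1
  have hUmem2 : ∀ u ∈ Wb ⊓ Mb0, TT Bf u w' ∈ g := by
    intro u hu
    have o1 : Bf w u = 0 := (hortb u hu.2).1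
    have o2 : Bf w' u = 0 := (hortb u hu.2).2
    have hw1 : ⁅D, TT Bf u w'⁆ = TT Bf u w' := S.lie_D_TTw' o1 o2
    have hmem : TT Bf u w' ∈ {x : Module.End K M | x ∈ g ∧ InPosPart D x} := by
      rw [hU]
      refine ⟨0, ⟨skew0, inpos_zero D, ?_, ?_⟩,
        TT Bf u w', ⟨TT_skew Bf hsymm u w', inpos_of_weight_one hw1, ?_, ?_, ?_⟩,
        (zero_add _).symm⟩
      · intro v hv; simp
      · intro v; simp
      · intro v hv
        rw [TT_apply, hWbiso u hu.1 v hv]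
        simp only [zero_smul, zero_sub]
        exact neg_mem (Submodule.smul_mem _ _ hu.1)
      · intro v hv
        rw [TT_apply, hWb'iso w' hw'Wb' v hv]
        simp only [zero_smul, sub_zero]
        exact Submodule.smul_mem _ _ hw'Wb'
      · intro v hv
        rw [TT_apply, show Bf u v = 0 from by rw [hsymm]; exact hortab v hv u hu.2,
          (horta v hv).2]
        simp
    exact hmem.1
  -- hU : characterization direction
  have hUchar : ∀ z ∈ g, ⁅D, z⁆ = z →
      ∃ ua ∈ Ma0, ∃ ub ∈ Wb ⊓ Mb0, z = TT Bf (ua + ub) w' := by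
    intro z hzg hz1
    have hzmem : z ∈ {x : Module.End K M | x ∈ g ∧ InPosPart D x} :=
      ⟨hzg, inpos_of_weight_one hz1⟩
    rw [hU] at hzmem
    obtain ⟨xa, ⟨ha1, ha2, ha3, ha4⟩, xb, ⟨hb1, hb2, hb3, hb4, hb5⟩, rfl⟩ := hzmem
    have hwa : ⁅D, xa⁆ = xa := S.weight_one_of_inpos ha1 ha2
    have hwb : ⁅D, xb⁆ = xb := S.weight_one_of_inpos hb1 hb2
    obtain ⟨hxaT, oa1, oa2⟩ := S.weight_one_struct ha1 hwa
    obtain ⟨hxbT, ob1, ob2⟩ := S.weight_one_struct hb1 hwb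
    have hua0 : -(xa w) ∈ Ma0 ⊔ Mb0 := by
      refine hmem0 _ ?_ ?_ <;> rw [map_neg] <;> simp [oa1, oa2]
    have hua : -(xa w) ∈ Ma0 := by
      refine hint1 _ ?_ hua0
      exact neg_mem (ha4 w)
    have hub0 : -(xb w) ∈ Ma0 ⊔ Mb0 := by
      refine hmem0 _ ?_ ?_ <;> rw [map_neg] <;> simp [ob1, ob2]
    have hub : -(xb w) ∈ Wb ⊓ Mb0 := hWbMb _ (neg_mem (hb3 w hwWb)) hub0
    refine ⟨-(xa w), hua, -(xb w), hub, ?_⟩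
    rw [TT_add_left, ← hxaT, ← hxbT]
  -- the weight -1 part of g
  let SS : Submodule K M :=
    { carrier := {v : M | v ∈ Ma0 ⊔ Mb0 ∧ TT Bf v w ∈ g}
      add_mem' := by
        rintro a b ⟨ha1, ha2⟩ ⟨hb1, hb2⟩
        exact ⟨add_mem ha1 hb1, by rw [TT_add_left]; exact add_mem ha2 hb2⟩
      zero_mem' := ⟨zero_mem _, by rw [TT_zero_left]; exact zero_mem g⟩
      smul_mem' := by
        rintro c a ⟨h1, h2⟩
        exact ⟨Submodule.smul_mem _ _ h1, by rw [TT_smul_left]; exact Submodule.smul_mem _ _ h2⟩ }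
  have hSmem : ∀ v : M, v ∈ SS ↔ (v ∈ Ma0 ⊔ Mb0 ∧ TT Bf v w ∈ g) := fun v => Iff.rfl
  have Schar : ∀ z ∈ g, ⁅D, z⁆ = -z → ∃ v ∈ SS, z = TT Bf v w := by
    intro z hzg hz1
    obtain ⟨hzT, o1, o2⟩ := S.weight_neg_one_struct (hgso z hzg) hz1
    refine ⟨-(z w'), ?_, hzT⟩
    refine (hSmem _).mpr ⟨?_, ?_⟩
    · refine hmem0 _ ?_ ?_ <;> rw [map_neg] <;> simp [o1, o2]
    · rw [← hzT]; exact hzg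
  -- D-invariance tricks
  have Dtrick1 : ∀ N N' : Submodule K M, IsCompl N N' → (∀ n ∈ N, D n ∈ N) →
      (∀ n ∈ N', D n ∈ N') → (∀ n ∈ N, Bf w' n = 0) → w ∈ N' := by
    intro N N' hc hDN hDN' hN
    have hw : w ∈ N ⊔ N' := by rw [codisjoint_iff.mp hc.codisjoint]; exact Submodule.mem_top
    rcases Submodule.mem_sup.mp hw with ⟨n, hn, n', hn', hsum⟩
    have key : D n + n = -(D n' + n') := by
      have : D (n + n') = -(n + n') := by rw [hsum, hDw]
      rw [map_add] at this
      linear_combination (norm := module) this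
    have h1 : D n + n ∈ N := add_mem (hDN n hn) hn
    have h2 : D n + n ∈ N' := by rw [key]; exact neg_mem (add_mem (hDN' n' hn') hn')
    have h0 : D n + n = 0 := by
      have : D n + n ∈ N ⊓ N' := ⟨h1, h2⟩
      rw [disjoint_iff.mp hc.disjoint] at this
      exact (Submodule.mem_bot K).mp this
    have hDn : D n = -n := by linear_combination (norm := module) h0
    have : n = Bf w' n • w := S.eig_neg_one hDn
    rw [hN n hn] at this
    simp only [zero_smul] at this
    rw [this, zero_add] at hsum
    rw [← hsum]; exact hn'
  have Dtrick2 : ∀ N N' : Submodule K M, IsCompl N N' → (∀ n ∈ N, D n ∈ N) →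
      (∀ n ∈ N', D n ∈ N') → (∀ n ∈ N, Bf w n = 0) → w' ∈ N' := by
    intro N N' hc hDN hDN' hN
    have hw : w' ∈ N ⊔ N' := by rw [codisjoint_iff.mp hc.codisjoint]; exact Submodule.mem_top
    rcases Submodule.mem_sup.mp hw with ⟨n, hn, n', hn', hsum⟩
    have key : D n - n = -(D n' - n') := by
      have : D (n + n') = n + n' := by rw [hsum, hDw']
      rw [map_add] at this
      linear_combination (norm := module) this
    have h1 : D n - n ∈ N := sub_mem (hDN n hn) hn
    have h2 : D n - n ∈ N' := by rw [key]; exact neg_mem (sub_mem (hDN' n' hn') hn')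
    have h0 : D n - n = 0 := by
      have : D n - n ∈ N ⊓ N' := ⟨h1, h2⟩
      rw [disjoint_iff.mp hc.disjoint] at this
      exact (Submodule.mem_bot K).mp this
    have hDn : D n = n := by linear_combination (norm := module) h0
    have : n = Bf w n • w' := S.eig_one hDn
    rw [hN n hn] at this
    simp only [zero_smul] at this
    rw [this, zero_add] at hsum
    rw [← hsum]; exact hn'
  have hwne : w ≠ 0 := by
    intro h
    rw [h, map_zero] at hww'
    simp at hww'
  have hw'ne : w' ≠ 0 := by
    intro h
    rw [h, map_zero] at hww'
    simp at hww'
  -- invariance of SS under weight-zero elements of g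
  have hSinv : ∀ z ∈ g, ⁅D, z⁆ = 0 → ∀ v ∈ SS, z v ∈ SS := by
    intro z hzg hz0 v hv
    obtain ⟨hv1, hv2⟩ := (hSmem v).mp hv
    obtain ⟨c, xa, ⟨ha1, ha2, ha3, ha4, ha5⟩, xb, ⟨hb1, hb2, hb3, hb4, hb5, hb6⟩, hzeq⟩ :=
      hLevi z hzg hz0
    rcases Submodule.mem_sup.mp hv1 with ⟨va, hva, vb, hvb, hvsum⟩
    have hDv : D v = 0 := hD0 v hv1
    have hxav : xa v ∈ Ma0 := by
      rw [← hvsum, map_add, ha2 vb hvb, add_zero]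
      exact ha5 va hva
    have hxbv : xb v ∈ Mb0 := by
      rw [← hvsum, map_add, hb2 va hva, zero_add]
      obtain ⟨x0, hx0, y0, hy0, rfl⟩ := hMbsplit vb hvb
      rw [map_add]
      exact add_mem (hb5 x0 hx0).2 (hb6 y0 hy0).2
    have hzv : z v = xa v + xb v := by
      rw [hzeq]
      simp only [LinearMap.add_apply, LinearMap.smul_apply, hDv, smul_zero, zero_add]
    have hzvM0 : z v ∈ Ma0 ⊔ Mb0 := by
      rw [hzv]
      exact add_mem (le_sup_left (b := Mb0) hxav) (le_sup_right (a := Ma0) hxbv)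
    have ov1 : Bf w v = 0 := (horth v hv1).1
    have ov2 : Bf w' v = 0 := (horth v hv1).2
    have hbrk : ⁅z, TT Bf v w⁆ = -c • TT Bf v w + TT Bf (xa v) w + TT Bf (xb v) w := by
      rw [hzeq, add_lie, add_lie, smul_lie, S.lie_D_TTw ov1 ov2,
        S.lie_skew_TTw ha1 ha3, S.lie_skew_TTw hb1 hb3]
      module
    have hzmem : TT Bf (z v) w ∈ g := by
      have h1 : ⁅z, TT Bf v w⁆ ∈ g := hgbracket z hzg _ hv2
      have h2 : TT Bf (xa v) w + TT Bf (xb v) w ∈ g := by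
        have : TT Bf (xa v) w + TT Bf (xb v) w = ⁅z, TT Bf v w⁆ + c • TT Bf v w := by
          rw [hbrk]; module
        rw [this]
        exact add_mem h1 (Submodule.smul_mem _ _ hv2)
      rw [hzv, TT_add_left]
      exact h2
    exact (hSmem _).mpr ⟨hzvM0, hzmem⟩
  -- ===== dichotomy =====
  have dichotomy : Ma0 ≠ ⊥ → Mb0 ≠ ⊥ → False := by
    intro hMa hMb
    obtain ⟨uA, huA, huAne⟩ := Submodule.exists_mem_ne_zero_of_ne_bot hMa
    -- a pairing on the b-side
    have hexpair : ∃ u ∈ Wb ⊓ Mb0, ∃ y ∈ Wb' ⊓ Mb0, Bf u y ≠ 0 := by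
      by_contra hcon
      push_neg at hcon
      apply hMb
      rw [eq_bot_iff]
      intro vb hvb
      obtain ⟨x0, hx0, y0, hy0, rfl⟩ := hMbsplit vb hvb
      have hx00 : x0 = 0 := NDpair x0 hx0 (fun y hy => hcon x0 hx0 y hy)
      have hy00 : y0 = 0 := NDpair' y0 hy0 (fun u hu => hcon u hu y0 hy0)
      rw [hx00, hy00, add_zero]
      exact Submodule.zero_mem ⊥
    obtain ⟨u1, hu1, y1, hy1, hpair⟩ := hexpair
    -- step 1 : SS = ⊥
    have hSbot : SS = ⊥ := by
      rw [eq_bot_iff]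
      intro v hv
      obtain ⟨hv1, hv2⟩ := (hSmem v).mp hv
      have ov1 : Bf w v = 0 := (horth v hv1).1
      have ov2 : Bf w' v = 0 := (horth v hv1).2
      -- first constraint : Bf v vb = 0 for all vb ∈ Mb0
      have hcA : ∀ vb ∈ Mb0, Bf v vb = 0 := by
        intro vb hvb
        have oa1 : Bf w uA = 0 := (horta uA huA).1
        have oa2 : Bf w' uA = 0 := (horta uA huA).2
        have hz1 : ⁅TT Bf uA w', TT Bf v w⁆ = TT Bf uA v - Bf uA v • D :=
          S.lie_TTw'_TTw oa1 oa2 ov1 ov2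
        have hzg : TT Bf uA v - Bf uA v • D ∈ g := by
          rw [← hz1]
          exact hgbracket _ (hUmem1 uA huA) _ hv2
        have hz0 : ⁅D, TT Bf uA v - Bf uA v • D⁆ = 0 := by
          rw [lie_sub, lie_smul, S.lie_D_TT0 oa1 oa2 ov1 ov2, lie_self]
          simp
        obtain ⟨c, xa, ⟨ha1, ha2, ha3, ha4, ha5⟩, xb, ⟨hb1, hb2, hb3, hb4, hb5, hb6⟩, hzeq⟩ :=
          hLevi _ hzg hz0
        have heval : (TT Bf uA v - Bf uA v • D) vb = - Bf v vb • uA := by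
          simp only [LinearMap.sub_apply, LinearMap.smul_apply, TT_apply,
            hDb vb hvb, smul_zero, sub_zero, hortab uA huA vb hvb, zero_smul, zero_sub]
          module
        have heval2 : (TT Bf uA v - Bf uA v • D) vb = xb vb := by
          rw [hzeq]
          simp only [LinearMap.add_apply, LinearMap.smul_apply, hDb vb hvb, smul_zero,
            ha2 vb hvb, zero_add, add_zero]
        have hxbvb : xb vb ∈ Mb0 := by
          obtain ⟨x0, hx0, y0, hy0, rfl⟩ := hMbsplit vb hvb
          rw [map_add]
          exact add_mem (hb5 x0 hx0).2 (hb6 y0 hy0).2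
        have hmem1 : - Bf v vb • uA ∈ Ma0 ⊓ Mb0 := by
          constructor
          · exact Submodule.smul_mem _ _ huA
          · rw [← heval, heval2]; exact hxbvb
        rw [disjoint_iff.mp hdisj] at hmem1
        have := (Submodule.mem_bot K).mp hmem1
        rcases smul_eq_zero.mp this with h | h
        · have : Bf v vb = 0 := by linear_combination - h
          exact this
        · exact absurd h huAne
      -- hence the Mb0-component of v vanishes
      rcases Submodule.mem_sup.mp hv1 with ⟨va, hva, vb, hvb, hvsum⟩
      have hvb0 : vb = 0 := by
        refine NDb vb hvb ?_
        intro vb' hvb'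
        have h1 : Bf v vb' = 0 := hcA vb' hvb'
        have h2 : Bf va vb' = 0 := hortab va hva vb' hvb'
        have : Bf v vb' = Bf va vb' + Bf vb vb' := by
          rw [← hvsum, map_add]; simp
        rw [h1, h2] at this
        linear_combination - this
      have hvva : v = va := by rw [← hvsum, hvb0, add_zero]
      -- second constraint : the Ma0 part vanishes
      have ou1 : Bf w u1 = 0 := (hortb u1 hu1.2).1
      have ou2 : Bf w' u1 = 0 := (hortb u1 hu1.2).2
      have hz1 : ⁅TT Bf u1 w', TT Bf v w⁆ = TT Bf u1 v - Bf u1 v • D :=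
        S.lie_TTw'_TTw ou1 ou2 ov1 ov2
      have hzg : TT Bf u1 v - Bf u1 v • D ∈ g := by
        rw [← hz1]
        exact hgbracket _ (hUmem2 u1 hu1) _ hv2
      have hz0 : ⁅D, TT Bf u1 v - Bf u1 v • D⁆ = 0 := by
        rw [lie_sub, lie_smul, S.lie_D_TT0 ou1 ou2 ov1 ov2, lie_self]
        simp
      obtain ⟨c, xa, ⟨ha1, ha2, ha3, ha4, ha5⟩, xb, ⟨hb1, hb2, hb3, hb4, hb5, hb6⟩, hzeq⟩ :=
        hLevi _ hzg hz0
      have hy1b : y1 ∈ Mb0 := hy1.2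
      have hBvy1 : Bf v y1 = 0 := hcA y1 hy1b
      have heval : (TT Bf u1 v - Bf u1 v • D) y1 = Bf u1 y1 • v := by
        simp only [LinearMap.sub_apply, LinearMap.smul_apply, TT_apply,
          hDb y1 hy1b, smul_zero, sub_zero, hBvy1, zero_smul]
      have heval2 : (TT Bf u1 v - Bf u1 v • D) y1 = xb y1 := by
        rw [hzeq]
        simp only [LinearMap.add_apply, LinearMap.smul_apply, hDb y1 hy1b, smul_zero,
          ha2 y1 hy1b, zero_add, add_zero]
      have hxby1 : xb y1 ∈ Mb0 := (hb6 y1 hy1).2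
      have hmem1 : Bf u1 y1 • v ∈ Ma0 ⊓ Mb0 := by
        constructor
        · rw [hvva]; exact Submodule.smul_mem _ _ hva
        · rw [← heval, heval2]; exact hxby1
      rw [disjoint_iff.mp hdisj] at hmem1
      have := (Submodule.mem_bot K).mp hmem1
      rcases smul_eq_zero.mp this with h | h
      · exact absurd h hpair
      · rw [h]; exact Submodule.zero_mem ⊥
    -- step 2 : N = span {w'} is g-invariant
    have hNinv : ∀ x ∈ g, ∀ n ∈ Submodule.span K ({w'} : Set M),
        x n ∈ Submodule.span K ({w'} : Set M) := by
      intro x hx n hn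
      rcases Submodule.mem_span_singleton.mp hn with ⟨a, rfl⟩
      rw [map_smul]
      refine Submodule.smul_mem _ _ ?_
      have hxs : x w' = L43.zp D x w' + L43.zm D x w' + L43.z0 D x w' := by
        have := DFunLike.congr_fun (zp_add_zm_add_z0 D x) w'
        simp only [LinearMap.add_apply] at this
        exact this.symm
      obtain ⟨hpg, hmg, h0g⟩ := hcomp_mem x hx
      have hp1 : L43.zp D x w' = 0 := by
        obtain ⟨ua, hua, ub, hub, hT⟩ := hUchar _ hpg (S.lie_zp (hgso x hx))
        have hu : ua + ub ∈ Ma0 ⊔ Mb0 :=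
          add_mem (le_sup_left (b := Mb0) hua) (le_sup_right (a := Ma0) hub.2)
        rw [hT, TT_apply, hw'w',
          show Bf (ua + ub) w' = 0 from by rw [hsymm]; exact (horth _ hu).2]
        simp
      have hm1 : L43.zm D x w' = 0 := by
        obtain ⟨v, hv, hT⟩ := Schar _ hmg (S.lie_zm (hgso x hx))
        rw [hSbot] at hv
        have : v = 0 := (Submodule.mem_bot K).mp hv
        rw [hT, this, TT_zero_left]
        simp
      have h01 : L43.z0 D x w' ∈ Submodule.span K ({w'} : Set M) := by
        obtain ⟨c, xa, ⟨ha1, ha2, ha3, ha4, ha5⟩, xb, ⟨hb1, hb2, hb3, hb4, hb5, hb6⟩, hzeq⟩ :=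
          hLevi _ h0g (S.lie_z0 (hgso x hx))
        rw [hzeq]
        simp only [LinearMap.add_apply, LinearMap.smul_apply, hDw', ha4, hb4, add_zero]
        exact Submodule.smul_mem _ _ (Submodule.mem_span_singleton_self w')
      rw [hxs, hp1, hm1, zero_add, zero_add]
      exact h01
    obtain ⟨N', hcompl', hNinv'⟩ := hred _ hNinv
    -- step 3 : w ∈ N'
    have hwN' : w ∈ N' := by
      refine Dtrick1 _ N' hcompl' ?_ (fun n hn => hNinv' D hDg n hn) ?_
      · exact fun n hn => hNinv D hDg n hn
      · intro n hn
        rcases Submodule.mem_span_singleton.mp hn with ⟨a, rfl⟩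
        rw [map_smul, hw'w']
        simp
    -- step 4 : contradiction
    obtain ⟨uA', huA', hpairA⟩ : ∃ uA' ∈ Ma0, Bf uA uA' ≠ 0 := by
      by_contra hcon
      push_neg at hcon
      exact huAne (NDa uA huA hcon)
    have h1 : uA' ∈ N' := by
      have := hNinv' _ (hUmem1 uA' huA') w hwN'
      rw [S.TTw'_apply_w (horta uA' huA').1 (horta uA' huA').2] at this
      simpa using (neg_mem this : - - uA' ∈ N')
    have h2 : TT Bf uA w' uA' ∈ N' := hNinv' _ (hUmem1 uA huA) uA' h1
    have h3 : Bf uA uA' • w' ∈ N' := by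
      rw [TT_apply, (horta uA' huA').2] at h2
      simpa using h2
    have h4 : w' ∈ N' := by
      have := Submodule.smul_mem N' (Bf uA uA')⁻¹ h3
      rw [smul_smul, inv_mul_cancel₀ hpairA, one_smul] at this
      exact this
    have h5 : w' ∈ Submodule.span K ({w'} : Set M) := Submodule.mem_span_singleton_self w'
    have : w' ∈ Submodule.span K ({w'} : Set M) ⊓ N' := ⟨h5, h4⟩
    rw [disjoint_iff.mp hcompl'.disjoint] at this
    exact hw'ne ((Submodule.mem_bot K).mp this)
  -- pointwise decomposition of any endomorphism
  have hxs : ∀ x : Module.End K M, ∀ m : M,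
      x m = L43.zp D x m + L43.zm D x m + L43.z0 D x m := by
    intro x m
    have := DFunLike.congr_fun (zp_add_zm_add_z0 D x) m
    simp only [LinearMap.add_apply] at this
    exact this.symm
  -- ===== main case split =====
  by_cases hMa : Ma0 = ⊥
  · -- case 1 : Ma0 = ⊥, g = su
    left
    refine ⟨hMa, ?_⟩
    have hsup1 : Ma0 ⊔ Mb0 = Mb0 := by rw [hMa, bot_sup_eq]
    -- useful facts
    have huaw : ∀ z ∈ g, ⁅D, z⁆ = z → ∃ u ∈ Wb ⊓ Mb0, z = TT Bf u w' := by
      intro z hzg hz1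
      obtain ⟨ua, hua, ub, hub, hT⟩ := hUchar z hzg hz1
      have hua0 : ua = 0 := by
        rw [hMa] at hua
        exact (Submodule.mem_bot K).mp hua
      rw [hua0, zero_add] at hT
      exact ⟨ub, hub, hT⟩
    -- step A : N1 = span{w} ⊔ (Wb ⊓ Mb0) is g-invariant
    set N1 : Submodule K M := Submodule.span K ({w} : Set M) ⊔ (Wb ⊓ Mb0) with hN1def
    have hwN1 : w ∈ N1 :=
      le_sup_left (b := Wb ⊓ Mb0) (Submodule.mem_span_singleton_self w)
    have hN1inv : ∀ x ∈ g, ∀ n ∈ N1, x n ∈ N1 := by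
      intro x hx n hn
      rcases Submodule.mem_sup.mp hn with ⟨sw, hsw, x0, hx0, rfl⟩
      rcases Submodule.mem_span_singleton.mp hsw with ⟨a, rfl⟩
      obtain ⟨hpg, hmg, h0g⟩ := hcomp_mem x hx
      have hzp : L43.zp D x w ∈ N1 ∧ L43.zp D x x0 ∈ N1 := by
        obtain ⟨u, hu, hT⟩ := huaw _ hpg (S.lie_zp (hgso x hx))
        have ou1 : Bf w u = 0 := (hortb u hu.2).1
        have ou2 : Bf w' u = 0 := (hortb u hu.2).2
        constructor
        · rw [hT, S.TTw'_apply_w ou1 ou2]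
          exact neg_mem (le_sup_right (a := Submodule.span K ({w} : Set M)) hu)
        · rw [hT, TT_apply, hWbiso u hu.1 x0 hx0.1, (hortb x0 hx0.2).2]
          simp only [zero_smul, sub_zero]
          exact zero_mem N1
      have hzm : L43.zm D x w ∈ N1 ∧ L43.zm D x x0 ∈ N1 := by
        obtain ⟨v, hv, hT⟩ := Schar _ hmg (S.lie_zm (hgso x hx))
        have hvM : v ∈ Ma0 ⊔ Mb0 := ((hSmem v).mp hv).1
        constructor
        · rw [hT, TT_apply, hww, show Bf v w = 0 from by rw [hsymm]; exact (horth v hvM).1]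
          simp only [zero_smul, sub_zero]
          exact zero_mem N1
        · rw [hT, TT_apply, (hortb x0 hx0.2).1]
          simp only [zero_smul, sub_zero]
          exact le_sup_left (b := Wb ⊓ Mb0)
            (Submodule.smul_mem _ _ (Submodule.mem_span_singleton_self w))
      have hz0 : L43.z0 D x w ∈ N1 ∧ L43.z0 D x x0 ∈ N1 := by
        obtain ⟨c, xa, ⟨ha1, ha2, ha3, ha4, ha5⟩, xb, ⟨hb1, hb2, hb3, hb4, hb5, hb6⟩, hzeq⟩ :=
          hLevi _ h0g (S.lie_z0 (hgso x hx))
        constructor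
        · have hval : L43.z0 D x w = (-c) • w := by
            rw [hzeq]
            simp only [LinearMap.add_apply, LinearMap.smul_apply, hDw, ha3, hb3, add_zero]
            module
          rw [hval]
          exact le_sup_left (b := Wb ⊓ Mb0)
            (Submodule.smul_mem _ _ (Submodule.mem_span_singleton_self w))
        · have hval : L43.z0 D x x0 = xb x0 := by
            rw [hzeq]
            simp only [LinearMap.add_apply, LinearMap.smul_apply, hDb x0 hx0.2, smul_zero,
              ha2 x0 hx0.2, zero_add, add_zero]
          rw [hval]
          exact le_sup_right (a := Submodule.span K ({w} : Set M)) (hb5 x0 hx0)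
      have hfinal : x (a • w + x0) = a • (L43.zp D x w + L43.zm D x w + L43.z0 D x w) +
          (L43.zp D x x0 + L43.zm D x x0 + L43.z0 D x x0) := by
        rw [map_add, map_smul, hxs x w, hxs x x0]
      rw [hfinal]
      exact add_mem (Submodule.smul_mem _ _ (add_mem (add_mem hzp.1 hzm.1) hz0.1))
        (add_mem (add_mem hzp.2 hzm.2) hz0.2)
    obtain ⟨N1', hcN1, hN1inv'⟩ := hred N1 hN1inv
    have hw'N1' : w' ∈ N1' := by
      refine Dtrick2 N1 N1' hcN1 (fun n hn => hN1inv D hDg n hn)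
        (fun n hn => hN1inv' D hDg n hn) ?_
      intro n hn
      rcases Submodule.mem_sup.mp hn with ⟨sw, hsw, x0, hx0, rfl⟩
      rcases Submodule.mem_span_singleton.mp hsw with ⟨a, rfl⟩
      rw [map_add, map_smul, hww, (hortb x0 hx0.2).1]
      simp
    have hSSN1' : ∀ v ∈ SS, v ∈ N1' := by
      intro v hv
      have hvM : v ∈ Ma0 ⊔ Mb0 := ((hSmem v).mp hv).1
      have := hN1inv' _ ((hSmem v).mp hv).2 w' hw'N1'
      rw [S.TTw_apply_w' (horth v hvM).1 (horth v hvM).2] at this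
      simpa using (neg_mem this : - - v ∈ N1')
    have hSSiso : ∀ v ∈ SS, ∀ v' ∈ SS, Bf v' v = 0 := by
      intro v hv v' hv'
      have hvM : v ∈ Ma0 ⊔ Mb0 := ((hSmem v).mp hv).1
      have h1 : TT Bf v' w v ∈ N1' := hN1inv' _ ((hSmem v').mp hv').2 v (hSSN1' v hv)
      rw [TT_apply, (horth v hvM).1] at h1
      simp only [zero_smul, sub_zero] at h1
      have h2 : Bf v' v • w ∈ N1 := Submodule.smul_mem _ _ hwN1
      have : Bf v' v • w ∈ N1 ⊓ N1' := ⟨h2, h1⟩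
      rw [disjoint_iff.mp hcN1.disjoint] at this
      rcases smul_eq_zero.mp ((Submodule.mem_bot K).mp this) with h | h
      · exact h
      · exact absurd h hwne
    -- step B : SS ⊆ Wb' ⊓ Mb0
    have hSSW' : ∀ v ∈ SS, v ∈ Wb' ⊓ Mb0 := by
      intro v hv
      have hvM0 : v ∈ Ma0 ⊔ Mb0 := ((hSmem v).mp hv).1
      have hvM : v ∈ Mb0 := by rwa [hsup1] at hvM0
      obtain ⟨vp, hvp, vm, hvm, hvsum⟩ := hMbsplit v hvM
      have hvp0 : vp = 0 := by
        by_contra hvpne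
        obtain ⟨mW, hmW, hBvpm⟩ : ∃ mW ∈ Wb' ⊓ Mb0, Bf vp mW ≠ 0 := by
          by_contra hcon
          push_neg at hcon
          exact hvpne (NDpair vp hvp fun y hy => hcon y hy)
        have ov1 : Bf w v = 0 := (hortb v hvM).1
        have ov2 : Bf w' v = 0 := (hortb v hvM).2
        -- the hLevi constraint
        have hcon2 : ∀ u ∈ Wb ⊓ Mb0, ∀ m' ∈ Wb' ⊓ Mb0,
            Bf u m' • vp - Bf vp m' • u = 0 := by
          intro u hu m' hm'
          have ou1 : Bf w u = 0 := (hortb u hu.2).1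
          have ou2 : Bf w' u = 0 := (hortb u hu.2).2
          have hzg : TT Bf u v - Bf u v • D ∈ g := by
            rw [← S.lie_TTw'_TTw ou1 ou2 ov1 ov2]
            exact hgbracket _ (hUmem2 u hu) _ ((hSmem v).mp hv).2
          have hz0 : ⁅D, TT Bf u v - Bf u v • D⁆ = 0 := by
            rw [lie_sub, lie_smul, S.lie_D_TT0 ou1 ou2 ov1 ov2, lie_self]
            simp
          obtain ⟨c, xa, ⟨ha1, ha2, ha3, ha4, ha5⟩, xb, ⟨hb1, hb2, hb3, hb4, hb5, hb6⟩, hzeq⟩ :=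
            hLevi _ hzg hz0
          have hE : (TT Bf u v - Bf u v • D) m' = Bf u m' • v - Bf v m' • u := by
            simp only [LinearMap.sub_apply, LinearMap.smul_apply, TT_apply,
              hDb m' hm'.2, smul_zero, sub_zero]
          have hE2 : (TT Bf u v - Bf u v • D) m' = xb m' := by
            rw [hzeq]
            simp only [LinearMap.add_apply, LinearMap.smul_apply, hDb m' hm'.2, smul_zero,
              ha2 m' hm'.2, zero_add, add_zero]
          have hEW' : Bf u m' • v - Bf v m' • u ∈ Wb' ⊓ Mb0 := by
            rw [← hE, hE2]
            exact hb6 m' hm'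
          have hBvm' : Bf v m' = Bf vp m' := by
            rw [hvsum]
            simp only [map_add, LinearMap.add_apply]
            rw [hWb'iso vm hvm.1 m' hm'.1, add_zero]
          have hG2 : Bf u m' • vp - Bf vp m' • u =
              (Bf u m' • v - Bf v m' • u) - Bf u m' • vm := by
            rw [hBvm', hvsum]
            module
          have h5 : Bf u m' • vp - Bf vp m' • u ∈ Wb ⊓ Wb' := by
            constructor
            · exact (sub_mem (Submodule.smul_mem _ _ hvp.1) (Submodule.smul_mem _ _ hu.1) :
                _ ∈ Wb)
            · rw [hG2]
              exact (sub_mem hEW' (Submodule.smul_mem _ _ hvm) :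
                _ ∈ Wb' ⊓ Mb0).1
          rw [disjoint_iff.mp hWbdisj] at h5
          exact (Submodule.mem_bot K).mp h5
        have hWline : ∀ u ∈ Wb ⊓ Mb0, ∃ c0 : K, u = c0 • vp := by
          intro u hu
          have h6 : Bf vp mW • u = Bf u mW • vp := by
            linear_combination (norm := module) - hcon2 u hu mW hmW
          refine ⟨(Bf vp mW)⁻¹ * Bf u mW, ?_⟩
          have h7 := congrArg (fun t => (Bf vp mW)⁻¹ • t) h6
          simp only [smul_smul] at h7
          rwa [inv_mul_cancel₀ hBvpm, one_smul] at h7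
        have hμ : Bf vp vm = 0 := by
          have h1 : Bf v v = 0 := hSSiso v hv v hv
          rw [hvsum] at h1
          simp only [map_add, LinearMap.add_apply] at h1
          rw [hWbiso vp hvp.1 vp hvp.1, hWb'iso vm hvm.1 vm hvm.1, hsymm vm vp] at h1
          refine half_zero ?_
          linear_combination h1
        have hmWtop : mW ∈ N1 ⊔ N1' := by
          rw [codisjoint_iff.mp hcN1.codisjoint]
          exact Submodule.mem_top
        rcases Submodule.mem_sup.mp hmWtop with ⟨nn, hnn, nn', hnn', hnsum⟩
        rcases Submodule.mem_sup.mp hnn with ⟨sw, hsw, x0, hx0, rfl⟩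
        rcases Submodule.mem_span_singleton.mp hsw with ⟨a, rfl⟩
        have hnn'eq : nn' = mW - a • w - x0 := by
          rw [← hnsum]; abel
        have hBwnn' : Bf w nn' = 0 := by
          rw [hnn'eq, map_sub, map_sub, map_smul, hww, (hortb mW hmW.2).1,
            (hortb x0 hx0.2).1]
          simp
        have hTTv : TT Bf v w nn' ∈ N1' := hN1inv' _ ((hSmem v).mp hv).2 nn' hnn'
        rw [TT_apply, hBwnn'] at hTTv
        simp only [zero_smul, sub_zero] at hTTv
        have h8 : Bf v nn' • w ∈ N1 := Submodule.smul_mem _ _ hwN1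
        have h9 : Bf v nn' = 0 := by
          have : Bf v nn' • w ∈ N1 ⊓ N1' := ⟨h8, hTTv⟩
          rw [disjoint_iff.mp hcN1.disjoint] at this
          rcases smul_eq_zero.mp ((Submodule.mem_bot K).mp this) with h | h
          · exact h
          · exact absurd h hwne
        have hBvvp : Bf v vp = 0 := by
          rw [hvsum]
          simp only [map_add, LinearMap.add_apply]
          rw [hWbiso vp hvp.1 vp hvp.1, hsymm vm vp, hμ, add_zero]
        have hBvx0 : Bf v x0 = 0 := by
          obtain ⟨c0, hx0eq⟩ := hWline x0 hx0
          rw [hx0eq, map_smul, hBvvp, smul_zero]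
        have h10 : Bf v mW = Bf vp mW := by
          rw [hvsum]
          simp only [map_add, LinearMap.add_apply]
          rw [hWb'iso vm hvm.1 mW hmW.1, add_zero]
        rw [hnn'eq, map_sub, map_sub, map_smul, show Bf v w = 0 from by
            rw [hsymm]; exact ov1, hBvx0, h10] at h9
        simp only [smul_zero, sub_zero] at h9
        exact hBvpm h9
      rw [hvsum, hvp0, zero_add]
      exact hvm
    -- step C : Wb' ⊓ Mb0 ⊆ SS
    have hW'SS : ∀ f ∈ Wb' ⊓ Mb0, f ∈ SS := by
      intro f hf
      set N2 : Submodule K M := Submodule.span K ({w'} : Set M) ⊔ SS with hN2def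
      have hw'N2 : w' ∈ N2 :=
        le_sup_left (b := SS) (Submodule.mem_span_singleton_self w')
      have hN2inv : ∀ x ∈ g, ∀ n ∈ N2, x n ∈ N2 := by
        intro x hx n hn
        rcases Submodule.mem_sup.mp hn with ⟨sw, hsw, sv, hsv, rfl⟩
        rcases Submodule.mem_span_singleton.mp hsw with ⟨a, rfl⟩
        obtain ⟨hpg, hmg, h0g⟩ := hcomp_mem x hx
        have hsvM : sv ∈ Ma0 ⊔ Mb0 := ((hSmem sv).mp hsv).1
        have hzp : L43.zp D x w' ∈ N2 ∧ L43.zp D x sv ∈ N2 := by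
          obtain ⟨u, hu, hT⟩ := huaw _ hpg (S.lie_zp (hgso x hx))
          constructor
          · rw [hT, TT_apply, hw'w',
              show Bf u w' = 0 from by rw [hsymm]; exact (hortb u hu.2).2]
            simp only [zero_smul, sub_zero]
            exact zero_mem N2
          · rw [hT, TT_apply, (horth sv hsvM).2]
            simp only [zero_smul, sub_zero]
            exact le_sup_left (b := SS)
              (Submodule.smul_mem _ _ (Submodule.mem_span_singleton_self w'))
        have hzm : L43.zm D x w' ∈ N2 ∧ L43.zm D x sv ∈ N2 := by
          obtain ⟨v, hv, hT⟩ := Schar _ hmg (S.lie_zm (hgso x hx))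
          have hvM : v ∈ Ma0 ⊔ Mb0 := ((hSmem v).mp hv).1
          constructor
          · rw [hT, S.TTw_apply_w' (horth v hvM).1 (horth v hvM).2]
            exact le_sup_right (a := Submodule.span K ({w'} : Set M)) (neg_mem hv)
          · rw [hT, TT_apply, hSSiso sv hsv v hv, (horth sv hsvM).1]
            simp only [zero_smul, sub_zero, smul_zero]
            exact zero_mem N2
        have hz0 : L43.z0 D x w' ∈ N2 ∧ L43.z0 D x sv ∈ N2 := by
          constructor
          · obtain ⟨c, xa, ⟨ha1, ha2, ha3, ha4, ha5⟩, xb,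
              ⟨hb1, hb2, hb3, hb4, hb5, hb6⟩, hzeq⟩ := hLevi _ h0g (S.lie_z0 (hgso x hx))
            have hval : L43.z0 D x w' = c • w' := by
              rw [hzeq]
              simp only [LinearMap.add_apply, LinearMap.smul_apply, hDw', ha4, hb4, add_zero]
            rw [hval]
            exact le_sup_left (b := SS)
              (Submodule.smul_mem _ _ (Submodule.mem_span_singleton_self w'))
          · exact le_sup_right (a := Submodule.span K ({w'} : Set M))
              (hSinv _ h0g (S.lie_z0 (hgso x hx)) sv hsv)
        have hfinal : x (a • w' + sv) =
            a • (L43.zp D x w' + L43.zm D x w' + L43.z0 D x w') +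
            (L43.zp D x sv + L43.zm D x sv + L43.z0 D x sv) := by
          rw [map_add, map_smul, hxs x w', hxs x sv]
        rw [hfinal]
        exact add_mem (Submodule.smul_mem _ _ (add_mem (add_mem hzp.1 hzm.1) hz0.1))
          (add_mem (add_mem hzp.2 hzm.2) hz0.2)
      obtain ⟨N2', hcN2, hN2inv'⟩ := hred N2 hN2inv
      have hwN2' : w ∈ N2' := by
        refine Dtrick1 N2 N2' hcN2 (fun n hn => hN2inv D hDg n hn)
          (fun n hn => hN2inv' D hDg n hn) ?_
        intro n hn
        rcases Submodule.mem_sup.mp hn with ⟨sw, hsw, sv, hsv, rfl⟩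
        rcases Submodule.mem_span_singleton.mp hsw with ⟨a, rfl⟩
        rw [map_add, map_smul, hw'w', ((hSmem sv).mp hsv).1 |> horth sv |>.2]
        simp
      have hmWtop : f ∈ N2 ⊔ N2' := by
        rw [codisjoint_iff.mp hcN2.codisjoint]
        exact Submodule.mem_top
      rcases Submodule.mem_sup.mp hmWtop with ⟨nn, hnn, nn', hnn', hnsum⟩
      rcases Submodule.mem_sup.mp hnn with ⟨sw, hsw, sv, hsv, rfl⟩
      rcases Submodule.mem_span_singleton.mp hsw with ⟨a, rfl⟩
      have hnn'eq : nn' = f - a • w' - sv := by rw [← hnsum]; abel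
      have hkey : ∀ u ∈ Wb ⊓ Mb0, Bf u (f - sv) = 0 := by
        intro u hu
        have h1 : TT Bf u w' nn' ∈ N2' := hN2inv' _ (hUmem2 u hu) nn' hnn'
        have hBw'nn' : Bf w' nn' = 0 := by
          rw [hnn'eq, map_sub, map_sub, map_smul, hw'w',
            ((hSmem sv).mp hsv).1 |> horth sv |>.2, (hortb f hf.2).2]
          simp
        rw [TT_apply, hBw'nn'] at h1
        simp only [zero_smul, sub_zero] at h1
        have h2 : Bf u nn' • w' ∈ N2 := Submodule.smul_mem _ _ hw'N2
        have h3 : Bf u nn' = 0 := by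
          have : Bf u nn' • w' ∈ N2 ⊓ N2' := ⟨h2, h1⟩
          rw [disjoint_iff.mp hcN2.disjoint] at this
          rcases smul_eq_zero.mp ((Submodule.mem_bot K).mp this) with h | h
          · exact h
          · exact absurd h hw'ne
        have hBuw' : Bf u w' = 0 := by rw [hsymm]; exact (hortb u hu.2).2
        rw [hnn'eq, map_sub, map_sub, map_smul, hBuw'] at h3
        rw [map_sub]
        simpa using h3
      have hfsv : f - sv ∈ Wb' ⊓ Mb0 := sub_mem hf (hSSW' sv hsv)
      have := NDpair' _ hfsv hkey
      have hfeq : f = sv := by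
        have h4 := sub_eq_zero.mp this
        exact h4
      rw [hfeq]
      exact hsv
    -- D preserves Wb and Wb'
    have hDWb : ∀ x ∈ Wb, D x ∈ Wb := by
      intro x hx
      rw [hWb0] at hx
      rcases Submodule.mem_sup.mp hx with ⟨x0, hx0, sw, hsw, rfl⟩
      rcases Submodule.mem_span_singleton.mp hsw with ⟨a, rfl⟩
      rw [map_add, map_smul, hD0 x0 (by rw [hsup1]; exact hx0.2), hDw, zero_add]
      rw [hWb0]
      exact le_sup_right (a := Wb ⊓ Mb0)
        (Submodule.smul_mem _ _ (neg_mem (Submodule.mem_span_singleton_self w)))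
    have hDWb' : ∀ x ∈ Wb', D x ∈ Wb' := by
      intro x hx
      rw [hWb'0] at hx
      rcases Submodule.mem_sup.mp hx with ⟨x0, hx0, sw, hsw, rfl⟩
      rcases Submodule.mem_span_singleton.mp hsw with ⟨a, rfl⟩
      rw [map_add, map_smul, hD0 x0 (by rw [hsup1]; exact hx0.2), hDw', zero_add]
      rw [hWb'0]
      exact le_sup_right (a := Wb' ⊓ Mb0)
        (Submodule.smul_mem _ _ (Submodule.mem_span_singleton_self w'))
    -- spanning lemma for the b-side
    obtain ⟨nB, bW, fW, hbW, hfW, hexpW, hexpW'⟩ :=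
      exists_dual_pair Bf hsymm (Wb ⊓ Mb0) (Wb' ⊓ Mb0) NDpair NDpair'
    have hTT' : ∀ f' ∈ Wb' ⊓ Mb0, ∀ u ∈ Wb ⊓ Mb0, TT Bf f' u ∈ g := by
      intro f' hf' u hu
      have ou1 : Bf w u = 0 := (hortb u hu.2).1
      have ou2 : Bf w' u = 0 := (hortb u hu.2).2
      have of1 : Bf w f' = 0 := (hortb f' hf'.2).1
      have of2 : Bf w' f' = 0 := (hortb f' hf'.2).2
      have hf'S : f' ∈ SS := hW'SS f' hf'
      have hbr : TT Bf u f' - Bf u f' • D ∈ g := by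
        rw [← S.lie_TTw'_TTw ou1 ou2 of1 of2]
        exact hgbracket _ (hUmem2 u hu) _ ((hSmem f').mp hf'S).2
      have h1 : TT Bf u f' ∈ g := by
        have : TT Bf u f' = (TT Bf u f' - Bf u f' • D) + Bf u f' • D := by module
        rw [this]
        exact add_mem hbr (Submodule.smul_mem _ _ hDg)
      rw [TT_swap]
      exact neg_mem h1
    have spanB : ∀ z' : Module.End K M, SkewAdjEnd Bf z' → z' w = 0 → z' w' = 0 →
        (∀ x ∈ Wb, z' x ∈ Wb) → (∀ x ∈ Wb', z' x ∈ Wb') → z' ∈ g := by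
      intro z' hsk hzw hzw' hwb hwb'
      have himg : ∀ m : M, Bf w m = 0 → Bf w' m = 0 → z' m ∈ Mb0 := by
        intro m o1 o2
        have b1 : Bf w (z' m) = 0 := by
          have := hsk w m; rw [hzw] at this; simpa using this
        have b2 : Bf w' (z' m) = 0 := by
          have := hsk w' m; rw [hzw'] at this; simpa using this
        have := hmem0 _ b1 b2
        rwa [hsup1] at this
      have hbMW : ∀ i, z' (bW i) ∈ Wb ⊓ Mb0 := by
        intro i
        exact ⟨hwb _ (hbW i).1, himg _ (hortb _ (hbW i).2).1 (hortb _ (hbW i).2).2⟩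
      set E : Module.End K M := ∑ i, TT Bf (fW i) (z' (bW i)) with hE
      have hEg : E ∈ g := Submodule.sum_mem _ (fun i _ => hTT' _ (hfW i) _ (hbMW i))
      have hfin : z' = E := by
        refine S.end_ext ?_ ?_ ?_
        · rw [hzw, hE, LinearMap.sum_apply]
          refine (Finset.sum_eq_zero ?_).symm
          intro i _
          rw [TT_apply, show Bf (fW i) w = 0 from by rw [hsymm]; exact (hortb _ (hfW i).2).1,
            show Bf (z' (bW i)) w = 0 from by
              rw [hsymm]; exact (hortb _ (hbMW i).2).1]
          simp
        · rw [hzw', hE, LinearMap.sum_apply]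
          refine (Finset.sum_eq_zero ?_).symm
          intro i _
          rw [TT_apply, show Bf (fW i) w' = 0 from by rw [hsymm]; exact (hortb _ (hfW i).2).2,
            show Bf (z' (bW i)) w' = 0 from by
              rw [hsymm]; exact (hortb _ (hbMW i).2).2]
          simp
        · intro m o1 o2
          have hm : m ∈ Mb0 := by
            have := hmem0 m o1 o2
            rwa [hsup1] at this
          obtain ⟨xp, hxp, ym, hym, rfl⟩ := hMbsplit m hm
          have hstep : ∀ q : M, E q = (∑ i, Bf (fW i) q • z' (bW i)) -
              (∑ i, Bf (z' (bW i)) q • fW i) := by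
            intro q
            rw [hE, LinearMap.sum_apply, ← Finset.sum_sub_distrib]
            exact Finset.sum_congr rfl fun i _ => TT_apply Bf _ _ q
          have hxpart : E xp = z' xp := by
            rw [hstep]
            have h1 : (∑ i, Bf (z' (bW i)) xp • fW i) = 0 := by
              refine Finset.sum_eq_zero ?_
              intro i _
              rw [hWbiso _ (hbMW i).1 xp hxp.1, zero_smul]
            have h2 : (∑ i, Bf (fW i) xp • z' (bW i)) = z' xp := by
              conv_rhs => rw [hexpW xp hxp]
              rw [map_sum]
              exact (Finset.sum_congr rfl fun i _ => by rw [map_smul]).symm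
            rw [h1, h2, sub_zero]
          have hypart : E ym = z' ym := by
            rw [hstep]
            have h1 : (∑ i, Bf (fW i) ym • z' (bW i)) = 0 := by
              refine Finset.sum_eq_zero ?_
              intro i _
              rw [hWb'iso _ (hfW i).1 ym hym.1, zero_smul]
            have hzym : z' ym ∈ Wb' ⊓ Mb0 :=
              ⟨hwb' _ hym.1, himg _ (hortb _ hym.2).1 (hortb _ hym.2).2⟩
            have h2 : (∑ i, Bf (z' (bW i)) ym • fW i) = - z' ym := by
              have hco : ∀ i, Bf (z' (bW i)) ym = - Bf (bW i) (z' ym) := by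
                intro i
                have := hsk (bW i) ym
                linear_combination this
              calc (∑ i, Bf (z' (bW i)) ym • fW i)
                  = ∑ i, -(Bf (bW i) (z' ym) • fW i) := by
                    refine Finset.sum_congr rfl fun i _ => ?_
                    rw [hco i, neg_smul]
                _ = - ∑ i, Bf (bW i) (z' ym) • fW i := by rw [Finset.sum_neg_distrib]
                _ = - z' ym := by rw [← hexpW' _ hzym]
            rw [h1, h2]
            module
          rw [map_add, map_add, hxpart, hypart]
      rw [hfin]
      exact hEg
    -- final set equality
    refine Set.ext fun y => ⟨fun hy => ?_, fun hy => ?_⟩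
    · -- g ⊆ su
      have hyg : y ∈ g := hy
      refine ⟨hgso y hyg, ?_, ?_, ?_⟩
      · -- preserves Wb
        intro x hx
        obtain ⟨hpg, hmg, h0g⟩ := hcomp_mem y hyg
        have hp : L43.zp D y x ∈ Wb := by
          obtain ⟨u, hu, hT⟩ := huaw _ hpg (S.lie_zp (hgso y hyg))
          rw [hT, TT_apply, hWbiso u hu.1 x hx]
          simp only [zero_smul, zero_sub]
          exact neg_mem (Submodule.smul_mem _ _ hu.1)
        have hmm : L43.zm D y x ∈ Wb := by
          obtain ⟨v, hv, hT⟩ := Schar _ hmg (S.lie_zm (hgso y hyg))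
          rw [hT, TT_apply, hWbiso w hwWb x hx]
          simp only [zero_smul, sub_zero]
          exact Submodule.smul_mem _ _ hwWb
        have h0 : L43.z0 D y x ∈ Wb := by
          obtain ⟨c, xa, ⟨ha1, ha2, ha3, ha4, ha5⟩, xb,
            ⟨hb1, hb2, hb3, hb4, hb5, hb6⟩, hzeq⟩ := hLevi _ h0g (S.lie_z0 (hgso y hyg))
          rw [hWb0] at hx
          rcases Submodule.mem_sup.mp hx with ⟨x0, hx0, sw, hsw, rfl⟩
          rcases Submodule.mem_span_singleton.mp hsw with ⟨a, rfl⟩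
          have hval : L43.z0 D y (x0 + a • w) = c • (- (a • w)) + xb x0 := by
            rw [hzeq]
            simp only [LinearMap.add_apply, LinearMap.smul_apply, map_add, map_smul,
              hD0 x0 (by rw [hsup1]; exact hx0.2), hDw, ha2 x0 hx0.2, ha3, hb3,
              smul_zero, zero_add, add_zero, smul_neg]
            module
          rw [hval]
          refine add_mem ?_ ((hb5 x0 hx0).1)
          exact Submodule.smul_mem _ _ (neg_mem (Submodule.smul_mem _ _ hwWb))
        have := add_mem (add_mem hp hmm) h0
        rwa [← hxs y x] at this
      · -- preserves Wb'
        intro x hx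
        obtain ⟨hpg, hmg, h0g⟩ := hcomp_mem y hyg
        have hp : L43.zp D y x ∈ Wb' := by
          obtain ⟨u, hu, hT⟩ := huaw _ hpg (S.lie_zp (hgso y hyg))
          rw [hT, TT_apply, hWb'iso w' hw'Wb' x hx]
          simp only [zero_smul, sub_zero]
          exact Submodule.smul_mem _ _ hw'Wb'
        have hmm : L43.zm D y x ∈ Wb' := by
          obtain ⟨v, hv, hT⟩ := Schar _ hmg (S.lie_zm (hgso y hyg))
          have hvW' : v ∈ Wb' ⊓ Mb0 := hSSW' v hv
          rw [hT, TT_apply, hWb'iso v hvW'.1 x hx]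
          simp only [zero_smul, zero_sub]
          exact neg_mem (Submodule.smul_mem _ _ hvW'.1)
        have h0 : L43.z0 D y x ∈ Wb' := by
          obtain ⟨c, xa, ⟨ha1, ha2, ha3, ha4, ha5⟩, xb,
            ⟨hb1, hb2, hb3, hb4, hb5, hb6⟩, hzeq⟩ := hLevi _ h0g (S.lie_z0 (hgso y hyg))
          rw [hWb'0] at hx
          rcases Submodule.mem_sup.mp hx with ⟨x0, hx0, sw, hsw, rfl⟩
          rcases Submodule.mem_span_singleton.mp hsw with ⟨a, rfl⟩
          have hval : L43.z0 D y (x0 + a • w') = c • (a • w') + xb x0 := by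
            rw [hzeq]
            simp only [LinearMap.add_apply, LinearMap.smul_apply, map_add, map_smul,
              hD0 x0 (by rw [hsup1]; exact hx0.2), hDw', ha2 x0 hx0.2, ha4, hb4,
              smul_zero, zero_add, add_zero]
            module
          rw [hval]
          refine add_mem ?_ ((hb6 x0 hx0).1)
          exact Submodule.smul_mem _ _ (Submodule.smul_mem _ _ hw'Wb')
        have := add_mem (add_mem hp hmm) h0
        rwa [← hxs y x] at this
      · -- kills Ma0
        intro v hv
        rw [hMa] at hv
        rw [(Submodule.mem_bot K).mp hv, map_zero]
    · -- su ⊆ g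
      obtain ⟨hsk, hwb, hwb', _⟩ := hy
      -- closure of the preservation property
      have hpres : ∀ t : Module.End K M, (∀ x ∈ Wb, t x ∈ Wb) → (∀ x ∈ Wb', t x ∈ Wb') →
          (∀ x ∈ Wb, ⁅D, t⁆ x ∈ Wb) ∧ (∀ x ∈ Wb', ⁅D, t⁆ x ∈ Wb') := by
        intro t h1 h2
        constructor
        · intro x hx
          rw [S.lie_apply]
          exact sub_mem (hDWb _ (h1 x hx)) (h1 _ (hDWb x hx))
        · intro x hx
          rw [S.lie_apply]
          exact sub_mem (hDWb' _ (h2 x hx)) (h2 _ (hDWb' x hx))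
      obtain ⟨hd1, hd2⟩ := hpres y hwb hwb'
      obtain ⟨hdd1, hdd2⟩ := hpres _ hd1 hd2
      have hzpWb : ∀ x ∈ Wb, L43.zp D y x ∈ Wb := by
        intro x hx
        unfold L43.zp
        simp only [LinearMap.smul_apply, LinearMap.add_apply]
        exact Submodule.smul_mem _ _ (add_mem (hdd1 x hx) (hd1 x hx))
      have hzpWb' : ∀ x ∈ Wb', L43.zp D y x ∈ Wb' := by
        intro x hx
        unfold L43.zp
        simp only [LinearMap.smul_apply, LinearMap.add_apply]
        exact Submodule.smul_mem _ _ (add_mem (hdd2 x hx) (hd2 x hx))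
      have hzmWb : ∀ x ∈ Wb, L43.zm D y x ∈ Wb := by
        intro x hx
        unfold L43.zm
        simp only [LinearMap.smul_apply, LinearMap.sub_apply]
        exact Submodule.smul_mem _ _ (sub_mem (hdd1 x hx) (hd1 x hx))
      have hzmWb' : ∀ x ∈ Wb', L43.zm D y x ∈ Wb' := by
        intro x hx
        unfold L43.zm
        simp only [LinearMap.smul_apply, LinearMap.sub_apply]
        exact Submodule.smul_mem _ _ (sub_mem (hdd2 x hx) (hd2 x hx))
      have hz0Wb : ∀ x ∈ Wb, L43.z0 D y x ∈ Wb := by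
        intro x hx
        unfold L43.z0
        simp only [LinearMap.sub_apply]
        exact sub_mem (hwb x hx) (hdd1 x hx)
      have hz0Wb' : ∀ x ∈ Wb', L43.z0 D y x ∈ Wb' := by
        intro x hx
        unfold L43.z0
        simp only [LinearMap.sub_apply]
        exact sub_mem (hwb' x hx) (hdd2 x hx)
      -- skewness of the components
      have hskp : SkewAdjEnd Bf (L43.zp D y) := by
        unfold L43.zp
        exact skew_smul Bf _ (skew_add Bf
          (skew_bracket Bf S.Dskew (skew_bracket Bf S.Dskew hsk))
          (skew_bracket Bf S.Dskew hsk))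
      have hskm : SkewAdjEnd Bf (L43.zm D y) := by
        unfold L43.zm
        exact skew_smul Bf _ (skew_sub Bf
          (skew_bracket Bf S.Dskew (skew_bracket Bf S.Dskew hsk))
          (skew_bracket Bf S.Dskew hsk))
      have hsk0 : SkewAdjEnd Bf (L43.z0 D y) := by
        unfold L43.z0
        exact skew_sub Bf hsk (skew_bracket Bf S.Dskew (skew_bracket Bf S.Dskew hsk))
      -- membership of the components
      have hzpg : L43.zp D y ∈ g := by
        obtain ⟨hT, o1, o2⟩ := S.weight_one_struct hskp (S.lie_zp hsk)
        have hu : -(L43.zp D y w) ∈ Wb ⊓ Mb0 := by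
          constructor
          · exact neg_mem (hzpWb w hwWb)
          · have h1 : Bf w (-(L43.zp D y w)) = 0 := by rw [map_neg, o1, neg_zero]
            have h2 : Bf w' (-(L43.zp D y w)) = 0 := by rw [map_neg, o2, neg_zero]
            have := hmem0 _ h1 h2
            rwa [hsup1] at this
        rw [hT]
        exact hUmem2 _ hu
      have hzmg : L43.zm D y ∈ g := by
        obtain ⟨hT, o1, o2⟩ := S.weight_neg_one_struct hskm (S.lie_zm hsk)
        have hv : -(L43.zm D y w') ∈ Wb' ⊓ Mb0 := by
          constructor
          · exact neg_mem (hzmWb' w' hw'Wb')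
          · have h1 : Bf w (-(L43.zm D y w')) = 0 := by rw [map_neg, o1, neg_zero]
            have h2 : Bf w' (-(L43.zm D y w')) = 0 := by rw [map_neg, o2, neg_zero]
            have := hmem0 _ h1 h2
            rwa [hsup1] at this
        have hvS : -(L43.zm D y w') ∈ SS := hW'SS _ hv
        rw [hT]
        exact ((hSmem _).mp hvS).2
      have hz0g : L43.z0 D y ∈ g := by
        obtain ⟨e1, e2, _⟩ := S.weight_zero_struct hsk0 (S.lie_z0 hsk)
        set α : K := Bf w' (L43.z0 D y w) with hα
        set z' : Module.End K M := L43.z0 D y + α • D with hz'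
        have hz'w : z' w = 0 := by
          rw [hz', LinearMap.add_apply, LinearMap.smul_apply, e1, hDw]
          module
        have hz'w' : z' w' = 0 := by
          rw [hz', LinearMap.add_apply, LinearMap.smul_apply, e2, hDw']
          module
        have hz'sk : SkewAdjEnd Bf z' := skew_add Bf hsk0 (skew_smul Bf _ S.Dskew)
        have hz'Wb : ∀ x ∈ Wb, z' x ∈ Wb := by
          intro x hx
          rw [hz', LinearMap.add_apply, LinearMap.smul_apply]
          exact add_mem (hz0Wb x hx) (Submodule.smul_mem _ _ (hDWb x hx))
        have hz'Wb' : ∀ x ∈ Wb', z' x ∈ Wb' := by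
          intro x hx
          rw [hz', LinearMap.add_apply, LinearMap.smul_apply]
          exact add_mem (hz0Wb' x hx) (Submodule.smul_mem _ _ (hDWb' x hx))
        have hz'g : z' ∈ g := spanB z' hz'sk hz'w hz'w' hz'Wb hz'Wb'
        have : L43.z0 D y = z' - α • D := by rw [hz']; module
        rw [this]
        exact sub_mem hz'g (Submodule.smul_mem _ _ hDg)
      have hfinal := add_mem (add_mem hzpg hzmg) hz0g
      rw [zp_add_zm_add_z0 D y] at hfinal
      exact hfinal
  · -- case 2 : Mb0 = ⊥, g = so
    have hMb : Mb0 = ⊥ := by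
      by_contra h
      exact dichotomy hMa h
    right
    refine ⟨hMb, ?_⟩
    have hsup2 : Ma0 ⊔ Mb0 = Ma0 := by rw [hMb, sup_bot_eq]
    have hSSle : SS ≤ Ma0 := by
      intro v hv
      have := ((hSmem v).mp hv).1
      rwa [hsup2] at this
    -- step R1 : SS = Ma0
    have hSS : SS = Ma0 := by
      rcases Classical.em (∃ v ∈ SS, ∃ v' ∈ SS, Bf v v' ≠ 0) with hiso | hiso
      · obtain ⟨v, hv, v', hv', hBf⟩ := hiso
        refine le_antisymm hSSle ?_
        intro u hu
        have hvM : v ∈ Ma0 ⊔ Mb0 := ((hSmem v).mp hv).1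
        have hv'M : v' ∈ Ma0 ⊔ Mb0 := ((hSmem v').mp hv').1
        have ov1 : Bf w v = 0 := (horth v hvM).1
        have ov2 : Bf w' v = 0 := (horth v hvM).2
        have ov'1 : Bf w v' = 0 := (horth v' hv'M).1
        have ov'2 : Bf w' v' = 0 := (horth v' hv'M).2
        have ou1 : Bf w u = 0 := (horta u hu).1
        have ou2 : Bf w' u = 0 := (horta u hu).2
        have hz'g : TT Bf u v' - Bf u v' • D ∈ g := by
          rw [← S.lie_TTw'_TTw ou1 ou2 ov'1 ov'2]
          exact hgbracket _ (hUmem1 u hu) _ ((hSmem v').mp hv').2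
        have hbr : ⁅TT Bf u v' - Bf u v' • D, TT Bf v w⁆ ∈ g :=
          hgbracket _ hz'g _ ((hSmem v).mp hv).2
        have hTT0w : TT Bf u v' w = 0 := by
          rw [TT_apply, show Bf u w = 0 from by rw [hsymm]; exact ou1,
            show Bf v' w = 0 from by rw [hsymm]; exact ov'1]
          simp
        have hcompute : ⁅TT Bf u v' - Bf u v' • D, TT Bf v w⁆ =
            TT Bf (TT Bf u v' v) w + Bf u v' • TT Bf v w := by
          rw [sub_lie, smul_lie, S.lie_skew_TTw (TT_skew Bf hsymm u v') hTT0w,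
            S.lie_D_TTw ov1 ov2]
          module
        have h3 : TT Bf (TT Bf u v' v) w ∈ g := by
          have h4 : TT Bf (TT Bf u v' v) w =
              ⁅TT Bf u v' - Bf u v' • D, TT Bf v w⁆ - Bf u v' • TT Bf v w := by
            rw [hcompute]; module
          rw [h4]
          exact sub_mem hbr (Submodule.smul_mem _ _ ((hSmem v).mp hv).2)
        have h5 : TT Bf (TT Bf u v' v) w =
            Bf u v • TT Bf v' w - Bf v' v • TT Bf u w := by
          rw [show TT Bf u v' v = Bf u v • v' - Bf v' v • u from TT_apply Bf u v' v,
            TT_sub_left, TT_smul_left, TT_smul_left]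
        have h6 : Bf v' v • TT Bf u w ∈ g := by
          have : Bf v' v • TT Bf u w =
              Bf u v • TT Bf v' w - TT Bf (TT Bf u v' v) w := by
            rw [h5]; module
          rw [this]
          exact sub_mem (Submodule.smul_mem _ _ ((hSmem v').mp hv').2) h3
        have hne : Bf v' v ≠ 0 := by
          rw [hsymm v' v]; exact hBf
        have h7 : TT Bf u w ∈ g := by
          have := Submodule.smul_mem g (Bf v' v)⁻¹ h6
          rwa [smul_smul, inv_mul_cancel₀ hne, one_smul] at this
        exact (hSmem u).mpr ⟨by rw [hsup2]; exact hu, h7⟩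
      · -- SS isotropic : contradiction with reductivity
        exfalso
        push_neg at hiso
        let P : Submodule K M :=
          { carrier := {p : M | p ∈ Ma0 ∧ ∀ v ∈ SS, Bf v p = 0}
            add_mem' := by
              rintro a b ⟨ha1, ha2⟩ ⟨hb1, hb2⟩
              exact ⟨add_mem ha1 hb1, fun v hv => by rw [map_add, ha2 v hv, hb2 v hv, add_zero]⟩
            zero_mem' := ⟨zero_mem _, fun v hv => by rw [map_zero]⟩
            smul_mem' := by
              rintro c a ⟨h1, h2⟩
              exact ⟨Submodule.smul_mem _ _ h1, fun v hv => by
                rw [map_smul, h2 v hv, smul_zero]⟩ }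
        have hPmem : ∀ p : M, p ∈ P ↔ (p ∈ Ma0 ∧ ∀ v ∈ SS, Bf v p = 0) := fun p => Iff.rfl
        have hSP : ∀ v ∈ SS, v ∈ P := by
          intro v hv
          exact (hPmem v).mpr ⟨hSSle hv, fun v' hv' => hiso v' hv' v hv⟩
        have hPne : P ≠ ⊥ := by
          intro hP
          apply hMa
          rw [eq_bot_iff]
          intro p hp
          have hSS0 : ∀ v ∈ SS, v = (0 : M) := by
            intro v hv
            have := hSP v hv
            rw [hP] at this
            exact (Submodule.mem_bot K).mp this
          have : p ∈ P := (hPmem p).mpr ⟨hp, fun v hv => by rw [hSS0 v hv]; simp⟩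
          rw [hP] at this
          exact this
        -- N := P ⊔ span{w'} is g-invariant
        set NP : Submodule K M := P ⊔ Submodule.span K ({w'} : Set M) with hNPdef
        have hw'NP : w' ∈ NP :=
          le_sup_right (a := P) (Submodule.mem_span_singleton_self w')
        have hNPinv : ∀ x ∈ g, ∀ n ∈ NP, x n ∈ NP := by
          intro x hx n hn
          rcases Submodule.mem_sup.mp hn with ⟨p, hp, sw, hsw, rfl⟩
          rcases Submodule.mem_span_singleton.mp hsw with ⟨a, rfl⟩
          obtain ⟨hp1, hp2⟩ := (hPmem p).mp hp
          obtain ⟨hpg, hmg, h0g⟩ := hcomp_mem x hx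
          have hpM : p ∈ Ma0 ⊔ Mb0 := le_sup_left (b := Mb0) hp1
          have op1 : Bf w p = 0 := (horth p hpM).1
          have op2 : Bf w' p = 0 := (horth p hpM).2
          -- the components act correctly
          have hzp : L43.zp D x p ∈ NP ∧ L43.zp D x w' ∈ NP := by
            obtain ⟨ua, hua, ub, hub, hT⟩ := hUchar _ hpg (S.lie_zp (hgso x hx))
            have hub0 : ub = 0 := by
              have := hub.2
              rw [hMb] at this
              exact (Submodule.mem_bot K).mp this
            rw [hub0, add_zero] at hT
            constructor
            · rw [hT, TT_apply, op2]
              simp only [zero_smul, sub_zero]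
              exact le_sup_right (a := P)
                (Submodule.smul_mem _ _ (Submodule.mem_span_singleton_self w'))
            · rw [hT, TT_apply, hw'w',
                show Bf ua w' = 0 from by rw [hsymm]; exact (horta ua hua).2]
              simp only [zero_smul, sub_zero]
              exact zero_mem NP
          have hzm : L43.zm D x p ∈ NP ∧ L43.zm D x w' ∈ NP := by
            obtain ⟨v, hv, hT⟩ := Schar _ hmg (S.lie_zm (hgso x hx))
            have hvM : v ∈ Ma0 ⊔ Mb0 := ((hSmem v).mp hv).1
            constructor
            · rw [hT, TT_apply, hp2 v hv, op1]
              simp only [zero_smul, sub_zero]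
              exact zero_mem NP
            · rw [hT, S.TTw_apply_w' (horth v hvM).1 (horth v hvM).2]
              exact le_sup_left (b := Submodule.span K ({w'} : Set M)) (neg_mem (hSP v hv))
          have hz0 : L43.z0 D x p ∈ NP ∧ L43.z0 D x w' ∈ NP := by
            obtain ⟨c, xa, ⟨ha1, ha2, ha3, ha4, ha5⟩, xb, ⟨hb1, hb2, hb3, hb4, hb5, hb6⟩, hzeq⟩ :=
              hLevi _ h0g (S.lie_z0 (hgso x hx))
            constructor
            · have hval : L43.z0 D x p = xa p := by
                rw [hzeq]
                simp only [LinearMap.add_apply, LinearMap.smul_apply, hD0 p hpM, smul_zero,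
                  hb2 p hp1, zero_add, add_zero]
              rw [hval]
              refine le_sup_left (b := Submodule.span K ({w'} : Set M)) ?_
              refine (hPmem _).mpr ⟨ha5 p hp1, ?_⟩
              intro v hv
              have hvM : v ∈ Ma0 ⊔ Mb0 := ((hSmem v).mp hv).1
              have hvMa : v ∈ Ma0 := hSSle hv
              have hxav : xa v = L43.z0 D x v := by
                rw [hzeq]
                simp only [LinearMap.add_apply, LinearMap.smul_apply, hD0 v hvM, smul_zero,
                  hb2 v hvMa, zero_add, add_zero]
              have hskew := ha1 v p
              have : Bf v (xa p) = - Bf (xa v) p := by linear_combination hskew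
              rw [this, hxav]
              have hz0v : L43.z0 D x v ∈ SS := hSinv _ h0g (S.lie_z0 (hgso x hx)) v hv
              rw [hp2 _ hz0v]
              simp
            · have hval : L43.z0 D x w' = c • w' := by
                rw [hzeq]
                simp only [LinearMap.add_apply, LinearMap.smul_apply, hDw', ha4, hb4, add_zero]
              rw [hval]
              exact le_sup_right (a := P)
                (Submodule.smul_mem _ _ (Submodule.mem_span_singleton_self w'))
          have hfinal : x (p + a • w') = (L43.zp D x p + L43.zm D x p + L43.z0 D x p) +
              a • (L43.zp D x w' + L43.zm D x w' + L43.z0 D x w') := by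
            rw [map_add, map_smul, hxs x p, hxs x w']
          rw [hfinal]
          exact add_mem (add_mem (add_mem hzp.1 hzm.1) hz0.1)
            (Submodule.smul_mem _ _ (add_mem (add_mem hzp.2 hzm.2) hz0.2))
        obtain ⟨NP', hcNP, hNPinv'⟩ := hred NP hNPinv
        have hwNP' : w ∈ NP' := by
          refine Dtrick1 NP NP' hcNP (fun n hn => hNPinv D hDg n hn)
            (fun n hn => hNPinv' D hDg n hn) ?_
          intro n hn
          rcases Submodule.mem_sup.mp hn with ⟨p, hp, sw, hsw, rfl⟩
          rcases Submodule.mem_span_singleton.mp hsw with ⟨a, rfl⟩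
          rw [map_add, map_smul, hw'w',
            (horth p (le_sup_left (b := Mb0) ((hPmem p).mp hp).1)).2]
          simp
        obtain ⟨p0, hp0, hp0ne⟩ := Submodule.exists_mem_ne_zero_of_ne_bot hPne
        have hp0a : p0 ∈ Ma0 := ((hPmem p0).mp hp0).1
        have h8 : TT Bf p0 w' w ∈ NP' := hNPinv' _ (hUmem1 p0 hp0a) w hwNP'
        rw [S.TTw'_apply_w (horta p0 hp0a).1 (horta p0 hp0a).2] at h8
        have h9 : p0 ∈ NP' := by simpa using (neg_mem h8 : - - p0 ∈ NP')
        have h10 : p0 ∈ NP := le_sup_left (b := Submodule.span K ({w'} : Set M)) hp0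
        have : p0 ∈ NP ⊓ NP' := ⟨h10, h9⟩
        rw [disjoint_iff.mp hcNP.disjoint] at this
        exact hp0ne ((Submodule.mem_bot K).mp this)
    -- step R2 : every T u v with u v ∈ Ma0 lies in g
    have hTT2 : ∀ u ∈ Ma0, ∀ v ∈ Ma0, TT Bf u v ∈ g := by
      intro u hu v hv
      have ou1 : Bf w u = 0 := (horta u hu).1
      have ou2 : Bf w' u = 0 := (horta u hu).2
      have ov1 : Bf w v = 0 := (horta v hv).1
      have ov2 : Bf w' v = 0 := (horta v hv).2
      have hvS : v ∈ SS := by rw [hSS]; exact hv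
      have hbr : TT Bf u v - Bf u v • D ∈ g := by
        rw [← S.lie_TTw'_TTw ou1 ou2 ov1 ov2]
        exact hgbracket _ (hUmem1 u hu) _ ((hSmem v).mp hvS).2
      have : TT Bf u v = (TT Bf u v - Bf u v • D) + Bf u v • D := by module
      rw [this]
      exact add_mem hbr (Submodule.smul_mem _ _ hDg)
    -- spanning lemma : every skew endomorphism killing w, w' lies in g
    obtain ⟨nA, bF, cF, hbQ, hcQ, hexp1, hexp2⟩ :=
      exists_dual_pair Bf hsymm Ma0 Ma0 NDa
        (fun y hy h => NDa y hy (fun v hv => by rw [hsymm]; exact h v hv))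
    have spanA : ∀ z' : Module.End K M, SkewAdjEnd Bf z' → z' w = 0 → z' w' = 0 →
        z' ∈ g := by
      intro z' hsk hzw hzw'
      have himg : ∀ m : M, Bf w m = 0 → Bf w' m = 0 → z' m ∈ Ma0 := by
        intro m o1 o2
        have b1 : Bf w (z' m) = 0 := by
          have := hsk w m
          rw [hzw] at this
          simpa using this
        have b2 : Bf w' (z' m) = 0 := by
          have := hsk w' m
          rw [hzw'] at this
          simpa using this
        have := hmem0 _ b1 b2
        rwa [hsup2] at this
      have hbMa : ∀ i, z' (bF i) ∈ Ma0 :=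
        fun i => himg _ (horta _ (hbQ i)).1 (horta _ (hbQ i)).2
      set E : Module.End K M := ∑ i, TT Bf (cF i) (z' (bF i)) with hE
      have hEg : E ∈ g := Submodule.sum_mem _ (fun i _ => hTT2 _ (hcQ i) _ (hbMa i))
      have hEw : E w = 0 := by
        rw [hE, LinearMap.sum_apply]
        refine Finset.sum_eq_zero ?_
        intro i _
        rw [TT_apply, show Bf (cF i) w = 0 from by rw [hsymm]; exact (horta _ (hcQ i)).1,
          show Bf (z' (bF i)) w = 0 from by rw [hsymm]; exact (horta _ (hbMa i)).1]
        simp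
      have hEw' : E w' = 0 := by
        rw [hE, LinearMap.sum_apply]
        refine Finset.sum_eq_zero ?_
        intro i _
        rw [TT_apply, show Bf (cF i) w' = 0 from by rw [hsymm]; exact (horta _ (hcQ i)).2,
          show Bf (z' (bF i)) w' = 0 from by rw [hsymm]; exact (horta _ (hbMa i)).2]
        simp
      have hEm : ∀ m : M, Bf w m = 0 → Bf w' m = 0 → E m = z' m + z' m := by
        intro m o1 o2
        have hm : m ∈ Ma0 := by
          have := hmem0 m o1 o2
          rwa [hsup2] at this
        have hstep : E m = (∑ i, Bf (cF i) m • z' (bF i)) -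
            (∑ i, Bf (z' (bF i)) m • cF i) := by
          rw [hE, LinearMap.sum_apply, ← Finset.sum_sub_distrib]
          exact Finset.sum_congr rfl fun i _ => TT_apply Bf _ _ m
        have hp1 : (∑ i, Bf (cF i) m • z' (bF i)) = z' m := by
          conv_rhs => rw [hexp1 m hm]
          rw [map_sum]
          exact (Finset.sum_congr rfl fun i _ => by rw [map_smul]).symm
        have hp2 : (∑ i, Bf (z' (bF i)) m • cF i) = - z' m := by
          have hco : ∀ i, Bf (z' (bF i)) m = - Bf (bF i) (z' m) := by
            intro i
            have := hsk (bF i) m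
            linear_combination this
          have hzm' : z' m ∈ Ma0 := himg m o1 o2
          calc (∑ i, Bf (z' (bF i)) m • cF i)
              = ∑ i, -(Bf (bF i) (z' m) • cF i) := by
                refine Finset.sum_congr rfl fun i _ => ?_
                rw [hco i, neg_smul]
            _ = - ∑ i, Bf (bF i) (z' m) • cF i := by rw [Finset.sum_neg_distrib]
            _ = - z' m := by rw [← hexp2 _ hzm']
        rw [hstep, hp1, hp2]
        module
      have hfin : z' = (2⁻¹ : K) • E := by
        refine S.end_ext ?_ ?_ ?_
        · rw [LinearMap.smul_apply, hEw, hzw, smul_zero]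
        · rw [LinearMap.smul_apply, hEw', hzw', smul_zero]
        · intro m o1 o2
          rw [LinearMap.smul_apply, hEm m o1 o2]
          match_scalars <;> field_simp <;> ring
      rw [hfin]
      exact Submodule.smul_mem _ _ hEg
    -- conclusion of case 2
    refine Set.ext fun y => ⟨fun hy => hgso y hy, fun hy => ?_⟩
    have hy' : SkewAdjEnd Bf y := hy
    have hskp : SkewAdjEnd Bf (L43.zp D y) := by
      unfold L43.zp
      exact skew_smul Bf _ (skew_add Bf
        (skew_bracket Bf S.Dskew (skew_bracket Bf S.Dskew hy'))
        (skew_bracket Bf S.Dskew hy'))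
    have hskm : SkewAdjEnd Bf (L43.zm D y) := by
      unfold L43.zm
      exact skew_smul Bf _ (skew_sub Bf
        (skew_bracket Bf S.Dskew (skew_bracket Bf S.Dskew hy'))
        (skew_bracket Bf S.Dskew hy'))
    have hsk0 : SkewAdjEnd Bf (L43.z0 D y) := by
      unfold L43.z0
      exact skew_sub Bf hy' (skew_bracket Bf S.Dskew (skew_bracket Bf S.Dskew hy'))
    have hzpg : L43.zp D y ∈ g := by
      obtain ⟨hT, o1, o2⟩ := S.weight_one_struct hskp (S.lie_zp hy')
      have hu : -(L43.zp D y w) ∈ Ma0 := by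
        have h1 : Bf w (-(L43.zp D y w)) = 0 := by rw [map_neg, o1, neg_zero]
        have h2 : Bf w' (-(L43.zp D y w)) = 0 := by rw [map_neg, o2, neg_zero]
        have := hmem0 _ h1 h2
        rwa [hsup2] at this
      rw [hT]
      exact hUmem1 _ hu
    have hzmg : L43.zm D y ∈ g := by
      obtain ⟨hT, o1, o2⟩ := S.weight_neg_one_struct hskm (S.lie_zm hy')
      have hv : -(L43.zm D y w') ∈ Ma0 := by
        have h1 : Bf w (-(L43.zm D y w')) = 0 := by rw [map_neg, o1, neg_zero]
        have h2 : Bf w' (-(L43.zm D y w')) = 0 := by rw [map_neg, o2, neg_zero]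
        have := hmem0 _ h1 h2
        rwa [hsup2] at this
      have hvS : -(L43.zm D y w') ∈ SS := by rw [hSS]; exact hv
      rw [hT]
      exact ((hSmem _).mp hvS).2
    have hz0g : L43.z0 D y ∈ g := by
      obtain ⟨e1, e2, _⟩ := S.weight_zero_struct hsk0 (S.lie_z0 hy')
      set α : K := Bf w' (L43.z0 D y w) with hα
      set z' : Module.End K M := L43.z0 D y + α • D with hz'
      have hz'w : z' w = 0 := by
        rw [hz', LinearMap.add_apply, LinearMap.smul_apply, e1, hDw]
        module
      have hz'w' : z' w' = 0 := by
        rw [hz', LinearMap.add_apply, LinearMap.smul_apply, e2, hDw']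
        module
      have hz'sk : SkewAdjEnd Bf z' := skew_add Bf hsk0 (skew_smul Bf _ S.Dskew)
      have hz'g : z' ∈ g := spanA z' hz'sk hz'w hz'w'
      have : L43.z0 D y = z' - α • D := by rw [hz']; module
      rw [this]
      exact sub_mem hz'g (Submodule.smul_mem _ _ hDg)
    have hfinal := add_mem (add_mem hzpg hzmg) hz0g
    rw [zp_add_zm_add_z0 D y] at hfinal
    exact hfinal
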